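/- arXiv:1207.3629 — 5 statements merged into one kernel-verified Lean document; each statement's English description precedes it below -/
import Mathlib

section
/- Let (M, m) be a quasi-arithmetic matroid satisfying axioms (4) and (5): ρ(A,B) ≥ 0 whenever A ⊆ B and rk(A)=rk(B), and ρ*(A,B) ≥ 0 whenever A ⊆ B and rk*(A)=rk*(B). Then (M,m) satisfies axiom (P): ρ(R,S) ≥ 0 for every molecule [R,S]. -/
/-- `[R, R ∪ F ∪ T]` is a molecule for the rank function `rk`. -/
def IsMoleculeWith {α : Type*} [DecidableEq α] (rk : Finset α → ℕ)
    (R F T : Finset α) : Prop :=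
  Disjoint R F ∧ Disjoint R T ∧ Disjoint F T ∧
  ∀ A : Finset α, R ⊆ A → A ⊆ R ∪ F ∪ T → rk A = rk R + (A ∩ F).card

/-- `ρ(R,S) = (-1)^{|T|} Σ_{A ∈ [R,S]} (-1)^{|S|-|A|} m(A)`, where `T` is the dependent
part of the molecule `[R,S]`. -/
def rho {α : Type*} [DecidableEq α] (m : Finset α → ℕ) (T R S : Finset α) : ℤ :=
  (-1) ^ T.card * ∑ A ∈ Finset.Icc R S, (-1) ^ (S.card - A.card) * (m A : ℤ)

section Aux

open Finset

lemma neg_one_pow_sub' (a b : ℕ) (h : b ≤ a) : (-1 : ℤ) ^ (a - b) = (-1) ^ a * (-1) ^ b := by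
  rw [← pow_add]
  have : a + b = (a - b) + 2 * b := by omega
  rw [this, pow_add, pow_mul]
  norm_num

lemma sum_Icc_one {α : Type*} [DecidableEq α] (R T : Finset α) (hRT : Disjoint R T)
    (g : Finset α → ℤ) :
    ∑ A ∈ Finset.Icc R (R ∪ T), g A = ∑ T' ∈ T.powerset, g (R ∪ T') := by
  have hRT' := Finset.disjoint_left.1 hRT
  have hinv : ∀ A ∈ Finset.Icc R (R ∪ T), R ∪ (A ∩ T) = A := by
    intro A hA
    rw [Finset.mem_Icc] at hA
    ext a
    simp only [mem_union, mem_inter]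
    constructor
    · rintro (h | ⟨h, _⟩)
      exacts [hA.1 h, h]
    · intro h
      rcases Finset.mem_union.1 (hA.2 h) with h' | h'
      · exact Or.inl h'
      · exact Or.inr ⟨h, h'⟩
  refine Finset.sum_nbij' (fun A => A ∩ T) (fun T' => R ∪ T') ?_ ?_ ?_ ?_ ?_
  · intro A hA
    exact Finset.mem_powerset.2 Finset.inter_subset_right
  · intro T' hT'
    rw [Finset.mem_powerset] at hT'
    exact Finset.mem_Icc.2 ⟨Finset.subset_union_left, Finset.union_subset_union_right hT'⟩
  · intro A hA
    exact hinv A hA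
  · intro T' hT'
    rw [Finset.mem_powerset] at hT'
    ext a
    simp only [mem_inter, mem_union]
    constructor
    · rintro ⟨h | h, h2⟩
      · exact absurd h2 (hRT' h)
      · exact h
    · intro h
      exact ⟨Or.inr h, hT' h⟩
  · intro A hA
    exact (congrArg g (hinv A hA)).symm

lemma sum_Icc_pair {α : Type*} [DecidableEq α] {R F T : Finset α}
    (hRF : Disjoint R F) (hRT : Disjoint R T) (hFT : Disjoint F T)
    (g : Finset α → ℤ) :
    ∑ A ∈ Finset.Icc R (R ∪ F ∪ T), g A
      = ∑ F' ∈ F.powerset, ∑ T' ∈ T.powerset, g (R ∪ F' ∪ T') := by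
  have hRF' := Finset.disjoint_left.1 hRF
  have hRT' := Finset.disjoint_left.1 hRT
  have hFT' := Finset.disjoint_left.1 hFT
  have hinv : ∀ A ∈ Finset.Icc R (R ∪ F ∪ T), R ∪ (A ∩ F) ∪ (A ∩ T) = A := by
    intro A hA
    rw [Finset.mem_Icc] at hA
    ext a
    simp only [mem_union, mem_inter]
    constructor
    · rintro ((h | ⟨h, _⟩) | ⟨h, _⟩)
      exacts [hA.1 h, h, h]
    · intro h
      rcases Finset.mem_union.1 (hA.2 h) with h' | h'
      · rcases Finset.mem_union.1 h' with h'' | h''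
        · exact Or.inl (Or.inl h'')
        · exact Or.inl (Or.inr ⟨h, h''⟩)
      · exact Or.inr ⟨h, h'⟩
  rw [← Finset.sum_product']
  refine Finset.sum_nbij' (fun A => (A ∩ F, A ∩ T)) (fun p => R ∪ p.1 ∪ p.2) ?_ ?_ ?_ ?_ ?_
  · intro A hA
    simp only [Finset.mem_product, Finset.mem_powerset]
    exact ⟨Finset.inter_subset_right, Finset.inter_subset_right⟩
  · rintro ⟨F', T'⟩ hp
    simp only [Finset.mem_product, Finset.mem_powerset] at hp
    refine Finset.mem_Icc.2 ⟨(Finset.subset_union_left).trans Finset.subset_union_left, ?_⟩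
    exact Finset.union_subset_union (Finset.union_subset_union_right hp.1) hp.2
  · intro A hA
    exact hinv A hA
  · rintro ⟨F', T'⟩ hp
    simp only [Finset.mem_product, Finset.mem_powerset] at hp
    have h1 : (R ∪ F' ∪ T') ∩ F = F' := by
      ext a
      simp only [mem_inter, mem_union]
      constructor
      · rintro ⟨(h | h) | h, hf⟩
        · exact absurd hf (hRF' h)
        · exact h
        · exact absurd (hp.2 h) (hFT' hf)
      · intro h
        exact ⟨Or.inl (Or.inr h), hp.1 h⟩
    have h2 : (R ∪ F' ∪ T') ∩ T = T' := by
      ext a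
      simp only [mem_inter, mem_union]
      constructor
      · rintro ⟨(h | h) | h, ht⟩
        · exact absurd ht (hRT' h)
        · exact absurd ht (hFT' (hp.1 h))
        · exact h
      · intro h
        exact ⟨Or.inr h, hp.2 h⟩
    simp only [Prod.mk.injEq]
    exact ⟨h1, h2⟩
  · intro A hA
    exact (congrArg g (hinv A hA)).symm

lemma sum_Icc_compl {α : Type*} [Fintype α] [DecidableEq α] (R S : Finset α)
    (g : Finset α → ℤ) :
    ∑ C ∈ Finset.Icc (Finset.univ \ S) (Finset.univ \ R), g C
      = ∑ A ∈ Finset.Icc R S, g (Finset.univ \ A) := by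
  have hdd : ∀ X : Finset α, Finset.univ \ (Finset.univ \ X) = X := by
    intro X; ext a; simp
  refine Finset.sum_nbij' (fun C => Finset.univ \ C) (fun A => Finset.univ \ A) ?_ ?_ ?_ ?_ ?_
  · intro C hC
    rw [Finset.mem_Icc] at hC
    refine Finset.mem_Icc.2 ⟨?_, ?_⟩
    · have := Finset.sdiff_subset_sdiff (Finset.Subset.refl Finset.univ) hC.2
      rwa [hdd] at this
    · have := Finset.sdiff_subset_sdiff (Finset.Subset.refl Finset.univ) hC.1
      rwa [hdd] at this
  · intro A hA
    rw [Finset.mem_Icc] at hA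
    exact Finset.mem_Icc.2 ⟨Finset.sdiff_subset_sdiff (Finset.Subset.refl _) hA.2,
      Finset.sdiff_subset_sdiff (Finset.Subset.refl _) hA.1⟩
  · intro C _; exact hdd C
  · intro A _; exact hdd A
  · intro C hC
    exact (congrArg g (hdd C)).symm

lemma rho_single {α : Type*} [DecidableEq α] (m : Finset α → ℕ) (X : Finset α) (t : α)
    (ht : t ∉ X) : rho m {t} X (insert t X) = (m X : ℤ) - m (insert t X) := by
  have hne : X ≠ insert t X := by
    intro h
    exact ht (h ▸ Finset.mem_insert_self t X)
  have hIcc : Finset.Icc X (insert t X) = {X, insert t X} := by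
    ext A
    simp only [Finset.mem_Icc, Finset.mem_insert, Finset.mem_singleton]
    constructor
    · rintro ⟨h1, h2⟩
      by_cases htA : t ∈ A
      · exact Or.inr (Finset.Subset.antisymm h2 (Finset.insert_subset htA h1))
      · refine Or.inl (Finset.Subset.antisymm ?_ h1)
        intro a ha
        exact (Finset.mem_insert.1 (h2 ha)).resolve_left (fun h => htA (h ▸ ha))
    · rintro (rfl | rfl)
      · exact ⟨Finset.Subset.refl _, Finset.subset_insert _ _⟩
      · exact ⟨Finset.subset_insert _ _, Finset.Subset.refl _⟩
  have hcard : (insert t X).card = X.card + 1 := Finset.card_insert_of_notMem ht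
  unfold rho
  rw [hIcc, Finset.sum_pair hne, hcard]
  have e1 : X.card + 1 - X.card = 1 := by omega
  have e2 : X.card + 1 - (X.card + 1) = 0 := by omega
  rw [e1, e2]
  simp
  ring

end Aux

/-- a quasi-arithmetic matroid (axioms (A1), (A2)) satisfying axioms (4) and
(5) of D'Adderio–Moci satisfies the positivity axiom (P): `ρ(R,S) ≥ 0` for every molecule
`[R,S]`. -/
theorem axiom45_imp_axiomP {α : Type*} [Fintype α] [DecidableEq α]
    (rk : Finset α → ℕ) (m : Finset α → ℕ)
    (hR0 : rk ∅ = 0)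
    (hR1 : ∀ A B : Finset α, A ⊆ B → rk A ≤ rk B)
    (hR2 : ∀ A B : Finset α, rk (A ∪ B) + rk (A ∩ B) ≤ rk A + rk B)
    (hR3 : ∀ (A : Finset α) (e : α), rk (insert e A) ≤ rk A + 1)
    -- (A1): divisibility
    (hA1 : ∀ (A : Finset α) (e : α), e ∉ A →
      (rk (insert e A) = rk A → m (insert e A) ∣ m A) ∧
      (rk (insert e A) ≠ rk A → m A ∣ m (insert e A)))
    -- (A2): multiplicativity on molecules
    (hA2 : ∀ R F T : Finset α, IsMoleculeWith rk R F T →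
      m R * m (R ∪ F ∪ T) = m (R ∪ F) * m (R ∪ T))
    -- axiom (4): positivity on rank-preserving intervals
    (h4 : ∀ A B : Finset α, A ⊆ B → rk A = rk B → 0 ≤ rho m (B \ A) A B)
    -- axiom (5): positivity on corank-preserving intervals (i.e. for the dual)
    (h5 : ∀ A B : Finset α, A ⊆ B →
      A.card + rk (Finset.univ \ A) = B.card + rk (Finset.univ \ B) →
      0 ≤ rho (fun C => m (Finset.univ \ C)) (B \ A) A B) :
    -- axiom (P)
    ∀ R F T : Finset α, IsMoleculeWith rk R F T → 0 ≤ rho m T R (R ∪ F ∪ T) := by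
  intro R F T hmol
  obtain ⟨hRF, hRT, hFT, hrk⟩ := hmol
  have hRF' := Finset.disjoint_left.1 hRF
  have hRT' := Finset.disjoint_left.1 hRT
  have hFT' := Finset.disjoint_left.1 hFT
  -- cards of unions
  have hcard : ∀ F' T' : Finset α, F' ⊆ F → T' ⊆ T →
      (R ∪ F' ∪ T').card = R.card + F'.card + T'.card := by
    intro F' T' hF' hT'
    rw [Finset.card_union_of_disjoint
        (Finset.disjoint_union_left.2 ⟨hRT.mono_right hT', hFT.mono hF' hT'⟩),
      Finset.card_union_of_disjoint (hRF.mono_right hF')]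
  -- ranks inside the molecule
  have hrkU : ∀ F' T' : Finset α, F' ⊆ F → T' ⊆ T →
      rk (R ∪ F' ∪ T') = rk R + F'.card := by
    intro F' T' hF' hT'
    have hsub3 : R ∪ F' ∪ T' ⊆ R ∪ F ∪ T :=
      Finset.union_subset_union (Finset.union_subset_union_right hF') hT'
    have hRsub : R ⊆ R ∪ F' ∪ T' :=
      (Finset.subset_union_left).trans Finset.subset_union_left
    have hint : (R ∪ F' ∪ T') ∩ F = F' := by
      ext a
      simp only [Finset.mem_inter, Finset.mem_union]
      constructor
      · rintro ⟨(h | h) | h, hf⟩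
        · exact absurd hf (hRF' h)
        · exact h
        · exact absurd (hT' h) (hFT' hf)
      · intro h
        exact ⟨Or.inl (Or.inr h), hF' h⟩
    rw [hrk (R ∪ F' ∪ T') hRsub hsub3, hint]
  -- submolecules
  have hsubmol : ∀ F' T' : Finset α, F' ⊆ F → T' ⊆ T → IsMoleculeWith rk R F' T' := by
    intro F' T' hF' hT'
    refine ⟨hRF.mono_right hF', hRT.mono_right hT', hFT.mono hF' hT', ?_⟩
    intro A hRA hAsub
    have hAS : A ⊆ R ∪ F ∪ T :=
      hAsub.trans (Finset.union_subset_union (Finset.union_subset_union_right hF') hT')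
    rw [hrk A hRA hAS]
    have : A ∩ F = A ∩ F' := by
      ext a
      simp only [Finset.mem_inter]
      constructor
      · rintro ⟨ha, hf⟩
        refine ⟨ha, ?_⟩
        rcases Finset.mem_union.1 (hAsub ha) with h | h
        · rcases Finset.mem_union.1 h with h | h
          · exact absurd hf (hRF' h)
          · exact h
        · exact absurd (hT' h) (hFT' hf)
      · rintro ⟨ha, hf⟩
        exact ⟨ha, hF' hf⟩
    rw [this]
  by_cases hmR : m R = 0
  · -- degenerate case: all multiplicities on the interval vanish
    have hz : ∀ n (A : Finset α), A.card ≤ n → A ∈ Finset.Icc R (R ∪ F ∪ T) → m A = 0 := by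
      intro n
      induction n with
      | zero =>
        intro A hA hmem
        rw [Finset.mem_Icc] at hmem
        have hAe : A = ∅ := Finset.card_eq_zero.1 (Nat.le_zero.1 hA)
        have hRe : R = ∅ := Finset.subset_empty.1 (hAe ▸ hmem.1)
        rw [hAe, ← hRe]
        exact hmR
      | succ n ih =>
        intro A hAcard hmem
        have hmem' := hmem
        rw [Finset.mem_Icc] at hmem'
        by_cases hAT : (A ∩ T).Nonempty
        · obtain ⟨t, ht⟩ := hAT
          rw [Finset.mem_inter] at ht
          have htA : t ∈ A := ht.1
          have htX : t ∉ A.erase t := Finset.notMem_erase t A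
          have hXA : insert t (A.erase t) = A := Finset.insert_erase htA
          have hRX : R ⊆ A.erase t := by
            intro a ha
            exact Finset.mem_erase.2 ⟨fun h => hRT' ha (h ▸ ht.2), hmem'.1 ha⟩
          have hXS : A.erase t ⊆ R ∪ F ∪ T := (Finset.erase_subset t A).trans hmem'.2
          have hXcard : (A.erase t).card ≤ n := by
            have := Finset.card_erase_add_one htA
            omega
          have hmX : m (A.erase t) = 0 := ih (A.erase t) hXcard (Finset.mem_Icc.2 ⟨hRX, hXS⟩)
          have hXF : A.erase t ∩ F = A ∩ F := by
            ext a
            simp only [Finset.mem_inter, Finset.mem_erase]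
            constructor
            · rintro ⟨⟨_, ha⟩, hf⟩
              exact ⟨ha, hf⟩
            · rintro ⟨ha, hf⟩
              exact ⟨⟨fun h => hFT' hf (h ▸ ht.2), ha⟩, hf⟩
          have hrkX : rk (A.erase t) = rk A := by
            rw [hrk (A.erase t) hRX hXS, hrk A hmem'.1 hmem'.2, hXF]
          have h4' := h4 (A.erase t) A (Finset.erase_subset t A) hrkX
          have hdiff : A \ A.erase t = {t} := by
            ext a
            simp only [Finset.mem_sdiff, Finset.mem_erase, Finset.mem_singleton, not_and]
            constructor
            · rintro ⟨ha, h⟩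
              by_contra hne
              exact (h hne) ha
            · rintro rfl
              exact ⟨htA, fun h => absurd rfl h⟩
          rw [hdiff] at h4'
          have := rho_single m (A.erase t) t htX
          rw [hXA] at this
          rw [this] at h4'
          have hle : (m A : ℤ) ≤ (m (A.erase t) : ℤ) := by linarith
          rw [hmX] at hle
          exact_mod_cast le_antisymm (by exact_mod_cast hle) (Nat.zero_le _)
        · have hATe : A ∩ T = ∅ := Finset.not_nonempty_iff_eq_empty.1 hAT
          by_cases hAR : A = R
          · rw [hAR]; exact hmR
          · have hne : (A \ R).Nonempty := by
              rw [Finset.sdiff_nonempty]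
              intro h
              exact hAR (Finset.Subset.antisymm h hmem'.1)
            obtain ⟨f, hfmem⟩ := hne
            rw [Finset.mem_sdiff] at hfmem
            have hfF : f ∈ F := by
              rcases Finset.mem_union.1 (hmem'.2 hfmem.1) with h | h
              · rcases Finset.mem_union.1 h with h | h
                · exact absurd h hfmem.2
                · exact h
              · exact absurd (Finset.mem_inter.2 ⟨hfmem.1, h⟩) (by rw [hATe]; simp)
            have hfX : f ∉ A.erase f := Finset.notMem_erase f A
            have hXA : insert f (A.erase f) = A := Finset.insert_erase hfmem.1
            have hRX : R ⊆ A.erase f := by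
              intro a ha
              exact Finset.mem_erase.2 ⟨fun h => hfmem.2 (h ▸ ha), hmem'.1 ha⟩
            have hXS : A.erase f ⊆ R ∪ F ∪ T := (Finset.erase_subset f A).trans hmem'.2
            have hXcard : (A.erase f).card ≤ n := by
              have := Finset.card_erase_add_one hfmem.1
              omega
            have hmX : m (A.erase f) = 0 := ih (A.erase f) hXcard (Finset.mem_Icc.2 ⟨hRX, hXS⟩)
            have hXF : A.erase f ∩ F = (A ∩ F).erase f := by
              ext a
              simp only [Finset.mem_inter, Finset.mem_erase]
              tauto
            have hrkne : rk (insert f (A.erase f)) ≠ rk (A.erase f) := by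
              rw [hXA, hrk A hmem'.1 hmem'.2, hrk (A.erase f) hRX hXS, hXF]
              have := Finset.card_erase_add_one (Finset.mem_inter.2 ⟨hfmem.1, hfF⟩)
              omega
            have hdvd := (hA1 (A.erase f) f hfX).2 hrkne
            rw [hXA, hmX] at hdvd
            exact zero_dvd_iff.1 hdvd
    have hzero : rho m T R (R ∪ F ∪ T) = 0 := by
      unfold rho
      rw [Finset.sum_eq_zero, mul_zero]
      intro A hA
      rw [hz A.card A le_rfl hA]
      simp
    rw [hzero]
  · -- main case
    set P : ℤ := ∑ F' ∈ F.powerset, (-1 : ℤ) ^ (F.card - F'.card) * (m (R ∪ F') : ℤ) with hP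
    have hQ : rho m T R (R ∪ T)
        = (-1) ^ T.card * ∑ T' ∈ T.powerset, (-1 : ℤ) ^ (T.card - T'.card) * (m (R ∪ T') : ℤ) := by
      unfold rho
      rw [sum_Icc_one R T hRT]
      congr 1
      refine Finset.sum_congr rfl ?_
      intro T' hT'
      rw [Finset.mem_powerset] at hT'
      have h1 : (R ∪ T).card = R.card + T.card := Finset.card_union_of_disjoint hRT
      have h2 : (R ∪ T').card = R.card + T'.card :=
        Finset.card_union_of_disjoint (hRT.mono_right hT')
      have h3 : (R ∪ T).card - (R ∪ T').card = T.card - T'.card := by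
        rw [h1, h2]; omega
      rw [h3]
    have term_eq : ∀ F' ∈ F.powerset, ∀ T' ∈ T.powerset,
        (m R : ℤ) * ((-1 : ℤ) ^ ((R ∪ F ∪ T).card - (R ∪ F' ∪ T').card) * (m (R ∪ F' ∪ T') : ℤ))
        = ((-1 : ℤ) ^ (F.card - F'.card) * (m (R ∪ F') : ℤ))
          * ((-1 : ℤ) ^ (T.card - T'.card) * (m (R ∪ T') : ℤ)) := by
      intro F' hF' T' hT'
      rw [Finset.mem_powerset] at hF' hT'
      have hc := hcard F' T' hF' hT'
      have hcS := hcard F T (Finset.Subset.refl F) (Finset.Subset.refl T)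
      have hF'le : F'.card ≤ F.card := Finset.card_le_card hF'
      have hT'le : T'.card ≤ T.card := Finset.card_le_card hT'
      have hsign : (R ∪ F ∪ T).card - (R ∪ F' ∪ T').card
          = (F.card - F'.card) + (T.card - T'.card) := by
        rw [hc, hcS]; omega
      rw [hsign, pow_add]
      have hmz : (m R : ℤ) * (m (R ∪ F' ∪ T') : ℤ) = (m (R ∪ F') : ℤ) * (m (R ∪ T') : ℤ) := by
        exact_mod_cast hA2 R F' T' (hsubmol F' T' hF' hT')
      linear_combination ((-1 : ℤ) ^ (F.card - F'.card) * (-1 : ℤ) ^ (T.card - T'.card)) * hmz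
    have key2 : (m R : ℤ) * ∑ A ∈ Finset.Icc R (R ∪ F ∪ T),
          (-1 : ℤ) ^ ((R ∪ F ∪ T).card - A.card) * (m A : ℤ)
        = P * ∑ T' ∈ T.powerset, (-1 : ℤ) ^ (T.card - T'.card) * (m (R ∪ T') : ℤ) := by
      rw [sum_Icc_pair hRF hRT hFT, hP, Finset.sum_mul_sum, Finset.mul_sum]
      refine Finset.sum_congr rfl fun F' hF' => ?_
      rw [Finset.mul_sum]
      exact Finset.sum_congr rfl fun T' hT' => term_eq F' hF' T' hT'
    have key : (m R : ℤ) * rho m T R (R ∪ F ∪ T) = P * rho m T R (R ∪ T) := by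
      rw [hQ]
      unfold rho
      conv_lhs => rw [mul_left_comm]
      rw [key2]
      ring
    have hQpos : 0 ≤ rho m T R (R ∪ T) := by
      have hrkeq : rk R = rk (R ∪ T) := by
        have := hrkU ∅ T (Finset.empty_subset F) (Finset.Subset.refl T)
        simpa using this.symm
      have h4' := h4 R (R ∪ T) Finset.subset_union_left hrkeq
      rwa [Finset.union_sdiff_cancel_left hRT] at h4'
    have hPpos : 0 ≤ P := by
      have hsub : Finset.univ \ (R ∪ F) ⊆ Finset.univ \ R :=
        Finset.sdiff_subset_sdiff (Finset.Subset.refl _) Finset.subset_union_left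
      have hdd : ∀ X : Finset α, Finset.univ \ (Finset.univ \ X) = X := by
        intro X; ext a; simp
      have hrkRF1 : rk (R ∪ F) = rk R + F.card := by
        have := hrkU F ∅ (Finset.Subset.refl F) (Finset.empty_subset T)
        simpa using this
      have hcRF : (R ∪ F).card = R.card + F.card := Finset.card_union_of_disjoint hRF
      have hRFle : (R ∪ F).card ≤ Finset.univ.card :=
        Finset.card_le_card (Finset.subset_univ _)
      have hRle : R.card ≤ Finset.univ.card := Finset.card_le_card (Finset.subset_univ _)
      have hcond : (Finset.univ \ (R ∪ F)).card + rk (Finset.univ \ (Finset.univ \ (R ∪ F)))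
          = (Finset.univ \ R).card + rk (Finset.univ \ (Finset.univ \ R)) := by
        rw [hdd, hdd, hrkRF1, Finset.card_sdiff_of_subset (Finset.subset_univ _),
          Finset.card_sdiff_of_subset (Finset.subset_univ _)]
        omega
      have h5' := h5 _ _ hsub hcond
      have hD : (Finset.univ \ R) \ (Finset.univ \ (R ∪ F)) = F := by
        ext a
        constructor
        · intro h
          rw [Finset.mem_sdiff, Finset.mem_sdiff] at h
          obtain ⟨⟨_, h1⟩, h2⟩ := h
          have haRF : a ∈ R ∪ F := by
            by_contra hc
            exact h2 (Finset.mem_sdiff.2 ⟨Finset.mem_univ a, hc⟩)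
          rcases Finset.mem_union.1 haRF with h | h
          · exact absurd h h1
          · exact h
        · intro h
          rw [Finset.mem_sdiff, Finset.mem_sdiff]
          refine ⟨⟨Finset.mem_univ a, fun hr => hRF' hr h⟩, ?_⟩
          intro hc
          exact (Finset.mem_sdiff.1 hc).2 (Finset.mem_union.2 (Or.inr h))
      rw [hD] at h5'
      have heval : rho (fun C => m (Finset.univ \ C)) F (Finset.univ \ (R ∪ F))
          (Finset.univ \ R) = P := by
        unfold rho
        rw [sum_Icc_compl R (R ∪ F), sum_Icc_one R F hRF, hP, Finset.mul_sum]
        refine Finset.sum_congr rfl ?_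
        intro F' hF'
        rw [Finset.mem_powerset] at hF'
        have hcRF' : (R ∪ F').card = R.card + F'.card :=
          Finset.card_union_of_disjoint (hRF.mono_right hF')
        have hRF'le : (R ∪ F').card ≤ Finset.univ.card :=
          Finset.card_le_card (Finset.subset_univ _)
        have hc1 : (Finset.univ \ R).card - (Finset.univ \ (R ∪ F')).card = F'.card := by
          rw [Finset.card_sdiff_of_subset (Finset.subset_univ _), Finset.card_sdiff_of_subset (Finset.subset_univ _)]
          omega
        simp only [hdd, hc1]
        rw [neg_one_pow_sub' F.card F'.card (Finset.card_le_card hF')]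
        ring
      rw [heval] at h5'
      exact h5'
    have hmRpos : (0 : ℤ) < (m R : ℤ) := by
      exact_mod_cast Nat.pos_of_ne_zero hmR
    have hprod : (m R : ℤ) * 0 ≤ (m R : ℤ) * rho m T R (R ∪ F ∪ T) := by
      rw [mul_zero, key]
      exact mul_nonneg hPpos hQpos
    exact le_of_mul_le_mul_left hprod hmRpos
end

section
/- Deletion-contraction for the multivariate arithmetic Tutte polynomial: for an arithmetic matroid A on E and e ∈ E, Z_A(q,v) = Z_{A∖e}(q,v) + v_e · Z_{A/e}(q,v) if e is a loop (rk({e})=0), and Z_A(q,v) = Z_{A∖e}(q,v) + (v_e/q) · Z_{A/e}(q,v) otherwise, where Z_A(q,v) := Σ_{A⊆E} m(A) q^{-rk(A)} Π_{e∈A} v_e. -/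
/-- The axioms of an arithmetic matroid `(rk, m)` on the finite ground set `α`. -/
def IsArithmeticMatroid {α : Type*} [Fintype α] [DecidableEq α]
    (rk : Finset α → ℕ) (m : Finset α → ℕ) : Prop :=
  (rk ∅ = 0) ∧
  (∀ A B : Finset α, A ⊆ B → rk A ≤ rk B) ∧
  (∀ A B : Finset α, rk (A ∪ B) + rk (A ∩ B) ≤ rk A + rk B) ∧
  (∀ (A : Finset α) (e : α), rk (insert e A) ≤ rk A + 1) ∧
  (∀ (A : Finset α) (e : α), e ∉ A →
    (rk (insert e A) = rk A → m (insert e A) ∣ m A) ∧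
    (rk (insert e A) ≠ rk A → m A ∣ m (insert e A))) ∧
  (∀ R F T : Finset α, IsMoleculeWith rk R F T →
    m R * m (R ∪ F ∪ T) = m (R ∪ F) * m (R ∪ T)) ∧
  (∀ R F T : Finset α, IsMoleculeWith rk R F T → 0 ≤ rho m T R (R ∪ F ∪ T))

/-- deletion–contraction for the multivariate arithmetic Tutte polynomial
`Z(q,v) = Σ_{A⊆E} m(A) q^{-rk(A)} Π_{e∈A} v_e`.  The deletion by `e` keeps `rk` and `m`;
the contraction has rank `A ↦ rk(A∪{e}) - rk({e})` and multiplicity `A ↦ m(A∪{e})`. -/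
theorem deletion_contraction {α : Type*} [Fintype α] [DecidableEq α]
    (rk : Finset α → ℕ) (m : Finset α → ℕ)
    (h : IsArithmeticMatroid rk m)
    (e : α) (q : ℚ) (hq : q ≠ 0) (v : α → ℚ) :
    (rk {e} = 0 →
      ∑ A : Finset α, (m A : ℚ) * q ^ (-(rk A : ℤ)) * ∏ b ∈ A, v b =
        (∑ A ∈ (Finset.univ.erase e).powerset,
            (m A : ℚ) * q ^ (-(rk A : ℤ)) * ∏ b ∈ A, v b) +
        v e * ∑ A ∈ (Finset.univ.erase e).powerset,
            (m (insert e A) : ℚ) * q ^ (-((rk (insert e A) - rk {e} : ℕ) : ℤ)) *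
              ∏ b ∈ A, v b) ∧
    (rk {e} ≠ 0 →
      ∑ A : Finset α, (m A : ℚ) * q ^ (-(rk A : ℤ)) * ∏ b ∈ A, v b =
        (∑ A ∈ (Finset.univ.erase e).powerset,
            (m A : ℚ) * q ^ (-(rk A : ℤ)) * ∏ b ∈ A, v b) +
        (v e / q) * ∑ A ∈ (Finset.univ.erase e).powerset,
            (m (insert e A) : ℚ) * q ^ (-((rk (insert e A) - rk {e} : ℕ) : ℤ)) *
              ∏ b ∈ A, v b) := by

  obtain ⟨h0, hmono, hsub, hunit, -, -, -⟩ := h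
  have hsplit : ∑ A : Finset α, (m A : ℚ) * q ^ (-(rk A : ℤ)) * ∏ b ∈ A, v b =
      (∑ A ∈ (Finset.univ.erase e).powerset,
          (m A : ℚ) * q ^ (-(rk A : ℤ)) * ∏ b ∈ A, v b) +
      ∑ A ∈ (Finset.univ.erase e).powerset,
          (m (insert e A) : ℚ) * q ^ (-(rk (insert e A) : ℤ)) * ∏ b ∈ insert e A, v b := by
    have he : e ∉ Finset.univ.erase e := Finset.notMem_erase e _
    have huniv : (Finset.univ : Finset α) = insert e (Finset.univ.erase e) := by
      simp [Finset.insert_erase (Finset.mem_univ e)]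
    rw [← Finset.powerset_univ, huniv, Finset.sum_powerset_insert he, Finset.erase_insert he]
  have hprod : ∀ A ∈ (Finset.univ.erase e).powerset,
      (∏ b ∈ insert e A, v b) = v e * ∏ b ∈ A, v b := by
    intro A hA
    rw [Finset.mem_powerset] at hA
    exact Finset.prod_insert (fun hcon => (Finset.notMem_erase e _) (hA hcon))
  constructor
  · intro hloop
    rw [hsplit, Finset.mul_sum]
    congr 1
    refine Finset.sum_congr rfl fun A hA => ?_
    rw [hprod A hA]
    simp only [hloop, Nat.sub_zero]
    ring
  · intro hne
    have h1 : rk {e} = 1 := by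
      have := hunit ∅ e
      rw [h0, show insert e (∅:Finset α) = {e} from rfl] at this
      omega
    rw [hsplit, Finset.mul_sum]
    congr 1
    refine Finset.sum_congr rfl fun A hA => ?_
    rw [hprod A hA, h1]
    have hge : 1 ≤ rk (insert e A) := by
      have : rk {e} ≤ rk (insert e A) := by
        apply hmono
        intro x hx
        simp at hx
        simp [hx]
      omega
    have hcast : ((rk (insert e A) - 1 : ℕ) : ℤ) = (rk (insert e A) : ℤ) - 1 := by
      omega
    rw [hcast]
    have : q ^ (-((rk (insert e A) : ℤ) - 1)) = q ^ (-(rk (insert e A) : ℤ)) * q := by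
      rw [show -((rk (insert e A):ℤ) - 1) = -(rk (insert e A):ℤ) + 1 by ring,
        zpow_add₀ hq, zpow_one]
    rw [this]
    field_simp
end

section
/- Crapo decomposition of the Boolean lattice: for a matroid M on a totally ordered finite ground set E with set of bases B, the power set 2^E is the disjoint union over B ∈ B of the intervals [B∖I(B), B∪E(B)], and each such interval is a molecule with independent part F = I(B) and dependent part T = E(B). -/
/-- `B` is a basis of the matroid with rank function `rk`. -/
def IsBasis {α : Type*} [Fintype α] [DecidableEq α] (rk : Finset α → ℕ)
    (B : Finset α) : Prop :=
  rk B = B.card ∧ rk B = rk Finset.univ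

/-- The set `E(B)` of externally active elements of a basis `B`: elements `e ∉ B`
depending on the elements of `B` following `e` in the order. -/
def extAct {α : Type*} [Fintype α] [LinearOrder α] (rk : Finset α → ℕ)
    (B : Finset α) : Finset α :=
  (Finset.univ \ B).filter
    (fun e => rk (insert e (B.filter (fun b => e < b))) = rk (B.filter (fun b => e < b)))

-- The set `I(B)` of internally active elements of a basis `B`: elements `e ∈ B` such
-- that there is no `f` preceding `e` with `(B∖{e})∪{f}` a basis.
open scoped Classical in
noncomputable def intAct {α : Type*} [Fintype α] [LinearOrder α] (rk : Finset α → ℕ)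
    (B : Finset α) : Finset α :=
  B.filter (fun e => ∀ f : α, f < e → ¬ IsBasis rk (insert f (B.erase e)))

open Finset
set_option linter.unusedSectionVars false

section RankLemmas
variable {α : Type*} [DecidableEq α] (rk : Finset α → ℕ)
variable (hR0 : rk ∅ = 0)
variable (hR1 : ∀ A B : Finset α, A ⊆ B → rk A ≤ rk B)
variable (hR2 : ∀ A B : Finset α, rk (A ∪ B) + rk (A ∩ B) ≤ rk A + rk B)
variable (hR3 : ∀ (A : Finset α) (e : α), rk (insert e A) ≤ rk A + 1)

include hR1 hR2 in
lemma spanned_mono {S T : Finset α} {e : α}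
    (h : rk (insert e S) = rk S) (hST : S ⊆ T) : rk (insert e T) = rk T := by
  have h1 := hR2 (insert e S) T
  have h2 : insert e S ∪ T = insert e T := by
    ext x; simp only [mem_union, mem_insert]; constructor
    · rintro ((rfl | hx) | hx) <;> simp_all [hST _]
    · rintro (rfl | hx) <;> tauto
  have h3 : S ⊆ insert e S ∩ T := subset_inter (subset_insert _ _) hST
  have h4 := hR1 _ _ h3
  have h5 := hR1 T (insert e T) (subset_insert _ _)
  rw [h2, h] at h1; omega

include hR0 hR3 in
lemma rk_le_card (A : Finset α) : rk A ≤ A.card := by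
  induction A using Finset.induction with
  | empty => simp [hR0]
  | @insert a s ha ih =>
    calc rk (insert a s) ≤ rk s + 1 := hR3 s a
    _ ≤ s.card + 1 := by omega
    _ = (insert a s).card := (card_insert_of_notMem ha).symm

include hR3 in
lemma rk_union_le (S X : Finset α) : rk (S ∪ X) ≤ rk S + X.card := by
  induction X using Finset.induction with
  | empty => simp
  | @insert a X ha ih =>
    have h : S ∪ insert a X = insert a (S ∪ X) := union_insert a S X
    rw [h]
    calc rk (insert a (S ∪ X)) ≤ rk (S ∪ X) + 1 := hR3 _ _
    _ ≤ rk S + X.card + 1 := by omega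
    _ ≤ rk S + (insert a X).card := by have := card_insert_le a X; have := card_insert_of_notMem ha; omega

include hR0 hR3 in
lemma subset_indep {B S : Finset α} (hB : rk B = B.card) (hSB : S ⊆ B) :
    rk S = S.card := by
  have h1 := rk_union_le rk hR3 S (B \ S)
  rw [union_sdiff_of_subset hSB] at h1
  have h2 : (B \ S).card = B.card - S.card := card_sdiff_of_subset hSB
  have h3 := card_le_card hSB
  have h4 := rk_le_card rk hR0 hR3 S
  omega

include hR1 hR2 in
lemma rk_union_spanned {S X : Finset α} (h : ∀ e ∈ X, rk (insert e S) = rk S) :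
    rk (S ∪ X) = rk S := by
  induction X using Finset.induction with
  | empty => simp
  | @insert a X ha ih =>
    have hX : S ∪ insert a X = insert a (S ∪ X) := union_insert a S X
    rw [hX]
    have := spanned_mono rk hR1 hR2 (h a (mem_insert_self a X)) (subset_union_left (s₂ := X))
    rw [this, ih (fun e he => h e (mem_insert_of_mem he))]

end RankLemmas
section Greedy
variable {α : Type*} [DecidableEq α] (rk : Finset α → ℕ)
variable (hR0 : rk ∅ = 0)
variable (hR1 : ∀ A B : Finset α, A ⊆ B → rk A ≤ rk B)
variable (hR2 : ∀ A B : Finset α, rk (A ∪ B) + rk (A ∩ B) ≤ rk A + rk B)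
variable (hR3 : ∀ (A : Finset α) (e : α), rk (insert e A) ≤ rk A + 1)

def grow (S : Finset α) (e : α) : Finset α :=
  if rk (insert e S) = rk S then S else insert e S

def gF (S : Finset α) (l : List α) : Finset α := l.foldl (grow rk) S

lemma subset_grow (S : Finset α) (e : α) : S ⊆ grow rk S e := by
  unfold grow; split
  · exact subset_rfl
  · exact subset_insert _ _

lemma grow_subset (S : Finset α) (e : α) : grow rk S e ⊆ insert e S := by
  unfold grow; split
  · exact subset_insert _ _
  · exact subset_rfl

lemma subset_gF (S : Finset α) (l : List α) : S ⊆ gF rk S l := by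
  induction l generalizing S with
  | nil => exact subset_rfl
  | cons e l ih => exact (subset_grow rk S e).trans (ih (grow rk S e))

lemma gF_subset (S : Finset α) (l : List α) : gF rk S l ⊆ S ∪ l.toFinset := by
  induction l generalizing S with
  | nil => simp [gF]
  | cons e l ih =>
    refine (ih (grow rk S e)).trans ?_
    intro x hx
    rcases Finset.mem_union.1 hx with h | h
    · rcases Finset.mem_insert.1 (grow_subset rk S e h) with rfl | h
      · simp
      · simp [h]
    · simp [h]

lemma gF_append (S : Finset α) (l₁ l₂ : List α) :
    gF rk S (l₁ ++ l₂) = gF rk (gF rk S l₁) l₂ := List.foldl_append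

include hR1 hR2 in
lemma rk_gF (S : Finset α) (l : List α) : rk (gF rk S l) = rk (S ∪ l.toFinset) := by
  induction l generalizing S with
  | nil => simp [gF]
  | cons e l ih =>
    show rk (gF rk (grow rk S e) l) = _
    rw [ih (grow rk S e)]
    unfold grow; split
    · rename_i h
      have h2 : S ∪ (e :: l).toFinset = insert e (S ∪ l.toFinset) := by
        simp [List.toFinset_cons, Finset.union_comm, Finset.insert_union, Finset.union_insert]
      rw [h2, spanned_mono rk hR1 hR2 h Finset.subset_union_left]
    · congr 1
      ext x; simp [List.toFinset_cons]

include hR1 hR3 in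
lemma card_gF (S : Finset α) (l : List α) (hS : rk S = S.card) :
    rk (gF rk S l) = (gF rk S l).card := by
  induction l generalizing S with
  | nil => exact hS
  | cons e l ih =>
    show rk (gF rk (grow rk S e) l) = _
    apply ih
    unfold grow; split
    · exact hS
    · rename_i h
      have he : e ∉ S := fun hin => h (by rw [Finset.insert_eq_self.2 hin])
      have h1 := hR3 S e
      have h2 := hR1 S (insert e S) (Finset.subset_insert _ _)
      rw [Finset.card_insert_of_notMem he]; omega

lemma gF_reject {S : Finset α} {l₁ l₂ : List α} {f : α}
    (h : f ∉ gF rk S (l₁ ++ f :: l₂)) :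
    rk (insert f (gF rk S l₁)) = rk (gF rk S l₁) ∧
      gF rk S l₁ ⊆ gF rk S (l₁ ++ f :: l₂) := by
  rw [gF_append] at h ⊢
  set M := gF rk S l₁ with hM
  have hsub : grow rk M f ⊆ gF rk (grow rk M f) l₂ := subset_gF rk _ _
  have hgf : gF rk M (f :: l₂) = gF rk (grow rk M f) l₂ := rfl
  constructor
  · by_contra hne
    have : grow rk M f = insert f M := by unfold grow; rw [if_neg hne]
    exact h (hgf ▸ hsub (this ▸ Finset.mem_insert_self f M))
  · exact hgf ▸ (subset_grow rk M f).trans hsub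

end Greedy
section Phase
variable {α : Type*} [Fintype α] [LinearOrder α]

def descL (A : Finset α) : List α := (A.sort (· ≤ ·)).reverse
def ascC (A : Finset α) : List α := ((univ \ A).sort (· ≤ ·))
def phase (A : Finset α) : List α := descL A ++ ascC A

lemma mem_descL {A : Finset α} {x : α} : x ∈ descL A ↔ x ∈ A := by simp [descL]
lemma mem_ascC {A : Finset α} {x : α} : x ∈ ascC A ↔ x ∉ A := by simp [ascC]

lemma phase_toFinset (A : Finset α) : (phase A).toFinset = univ := by
  ext x; simp [phase, descL, ascC]

lemma phase_nodup (A : Finset α) : (phase A).Nodup := by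
  rw [phase, List.nodup_append]
  refine ⟨List.nodup_reverse.2 (A.sort_nodup _), (univ \ A).sort_nodup _, ?_⟩
  intro x hx y hx' hxy
  subst hxy
  exact (mem_ascC.1 hx') (mem_descL.1 hx)

/-- elements strictly before `e` in `descL A` are greater than `e`. -/
lemma descL_before {A : Finset α} {d₁ d₂ : List α} {e : α}
    (h : descL A = d₁ ++ e :: d₂) : ∀ x ∈ d₁, e < x := by
  intro x hx
  have hs : (A.sort (· ≤ ·)).Pairwise (· ≤ ·) := A.pairwise_sort _
  have hrev : A.sort (· ≤ ·) = d₂.reverse ++ e :: d₁.reverse := by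
    have := congrArg List.reverse h
    simpa [descL, List.reverse_append] using this
  rw [hrev] at hs
  have hle : e ≤ x := by
    have h2 : List.Pairwise (· ≤ ·) (e :: d₁.reverse) := (List.pairwise_append.mp hs).2.1
    exact List.rel_of_pairwise_cons h2 (by simpa using hx)
  have hnd : (d₁ ++ e :: d₂).Nodup := by
    rw [← h]; exact List.nodup_reverse.2 (A.sort_nodup _)
  have hne : e ≠ x := by
    have hd := (List.nodup_append.mp hnd).2.2
    intro hcon; exact hd x hx e List.mem_cons_self hcon.symm
  exact lt_of_le_of_ne hle hne

/-- elements strictly before `f` in `ascC A` are smaller than `f`. -/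
lemma ascC_before {A : Finset α} {c₁ c₂ : List α} {f : α}
    (h : ascC A = c₁ ++ f :: c₂) : ∀ x ∈ c₁, x < f := by
  intro x hx
  have hs : (ascC A).Pairwise (· ≤ ·) := (univ \ A).pairwise_sort _
  rw [h] at hs
  have hle : x ≤ f := (List.pairwise_append.mp hs).2.2 x hx f (by simp)
  have hnd : (c₁ ++ f :: c₂).Nodup := by rw [← h]; exact (univ \ A).sort_nodup _
  have hne : x ≠ f := fun hcon => (List.nodup_append.mp hnd).2.2 x hx f (by simp) hcon
  exact lt_of_le_of_ne hle hne

end Phase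
section Construction
variable {α : Type*} [Fintype α] [LinearOrder α] (rk : Finset α → ℕ)
variable (hR0 : rk ∅ = 0)
variable (hR1 : ∀ A B : Finset α, A ⊆ B → rk A ≤ rk B)
variable (hR2 : ∀ A B : Finset α, rk (A ∪ B) + rk (A ∩ B) ≤ rk A + rk B)
variable (hR3 : ∀ (A : Finset α) (e : α), rk (insert e A) ≤ rk A + 1)

def gB (A : Finset α) : Finset α := gF rk ∅ (phase A)

include hR0 hR1 hR2 hR3 in
lemma gB_basis (A : Finset α) : IsBasis rk (gB rk A) := by
  constructor
  · exact card_gF rk hR1 hR3 ∅ (phase A) (by simp [hR0])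
  · have := rk_gF rk hR1 hR2 ∅ (phase A)
    rw [phase_toFinset, empty_union] at this
    exact this

include hR1 hR2 in
lemma gB_ext (A : Finset α) : A ⊆ gB rk A ∪ extAct rk (gB rk A) := by
  intro e he
  by_cases heB : e ∈ gB rk A
  · exact mem_union_left _ heB
  refine mem_union_right _ ?_
  obtain ⟨d₁, d₂, hd⟩ := List.append_of_mem (mem_descL.2 he)
  have hsplit : phase A = d₁ ++ e :: (d₂ ++ ascC A) := by
    rw [phase, hd, List.append_assoc]; rfl
  have hrej := gF_reject rk (S := ∅) (l₁ := d₁) (l₂ := d₂ ++ ascC A) (f := e)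
    (by rw [← hsplit]; exact heB)
  set M := gF rk ∅ d₁ with hM
  have hMB : M ⊆ gB rk A := by rw [gB, hsplit]; exact hrej.2
  have hMd : M ⊆ d₁.toFinset := by
    have := gF_subset rk ∅ d₁; simpa using this
  have hMsub : M ⊆ (gB rk A).filter (fun b => e < b) := by
    intro x hx
    rw [mem_filter]
    exact ⟨hMB hx, descL_before hd x (by simpa using hMd hx)⟩
  rw [extAct, mem_filter, mem_sdiff]
  exact ⟨⟨mem_univ e, heB⟩, spanned_mono rk hR1 hR2 hrej.1 hMsub⟩

include hR0 hR1 hR2 hR3 in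
lemma gB_int (A : Finset α) : gB rk A \ intAct rk (gB rk A) ⊆ A := by
  intro e he
  rw [mem_sdiff] at he
  obtain ⟨heB, heI⟩ := he
  by_contra heA
  apply heI
  simp only [intAct, mem_filter]
  refine ⟨heB, fun f hfe hbasis => ?_⟩
  set B := gB rk A with hB
  have hBb := gB_basis rk hR0 hR1 hR2 hR3 A
  have hBcard : rk B = B.card := hBb.1
  have hBuniv : rk B = rk univ := hBb.2
  have hone : 1 ≤ B.card := Finset.card_pos.2 ⟨e, heB⟩
  have herase : rk (B.erase e) = B.card - 1 := by
    rw [subset_indep rk hR0 hR3 hBcard (erase_subset e B), card_erase_of_mem heB]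
  by_cases hfB : f ∈ B
  · have hf' : f ∈ B.erase e := mem_erase.2 ⟨ne_of_lt hfe, hfB⟩
    rw [Finset.insert_eq_self.2 hf'] at hbasis
    have := hbasis.2
    omega
  · -- f rejected by the greedy algorithm
    have hfg : f ∉ gF rk ∅ (phase A) := hfB
    have key : rk (insert f (B.erase e)) = rk (B.erase e) := by
      by_cases hfA : f ∈ A
      · obtain ⟨d₁, d₂, hd⟩ := List.append_of_mem (mem_descL.2 hfA)
        have hsplit : phase A = d₁ ++ f :: (d₂ ++ ascC A) := by
          rw [phase, hd, List.append_assoc]; rfl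
        have hrej := gF_reject rk (S := ∅) (l₁ := d₁) (l₂ := d₂ ++ ascC A) (f := f)
          (by rw [← hsplit]; exact hfg)
        set M := gF rk ∅ d₁ with hM
        have hMB : M ⊆ B := by rw [hB, gB, hsplit]; exact hrej.2
        have hMd : M ⊆ d₁.toFinset := by have := gF_subset rk ∅ d₁; simpa using this
        have hMsub : M ⊆ B.erase e := by
          intro x hx
          refine mem_erase.2 ⟨?_, hMB hx⟩
          have hxA : x ∈ A := by
            have : x ∈ d₁ := by simpa using hMd hx
            exact mem_descL.1 (hd ▸ (List.mem_append.2 (Or.inl this)))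
          exact fun hcon => heA (hcon ▸ hxA)
        exact spanned_mono rk hR1 hR2 hrej.1 hMsub
      · obtain ⟨c₁, c₂, hc⟩ := List.append_of_mem (mem_ascC.2 hfA)
        have hsplit : phase A = (descL A ++ c₁) ++ f :: c₂ := by
          rw [phase, hc, List.append_assoc]
        have hrej := gF_reject rk (S := ∅) (l₁ := descL A ++ c₁) (l₂ := c₂) (f := f)
          (by rw [← hsplit]; exact hfg)
        set M := gF rk ∅ (descL A ++ c₁) with hM
        have hMB : M ⊆ B := by rw [hB, gB, hsplit]; exact hrej.2
        have hMd : M ⊆ (descL A ++ c₁).toFinset := by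
          have := gF_subset rk ∅ (descL A ++ c₁); simpa using this
        have hMsub : M ⊆ B.erase e := by
          intro x hx
          refine mem_erase.2 ⟨?_, hMB hx⟩
          have : x ∈ descL A ∨ x ∈ c₁ := by simpa using hMd hx
          rcases this with h | h
          · exact fun hcon => heA (hcon ▸ (mem_descL.1 h))
          · have : x < f := ascC_before hc x h
            exact ne_of_lt (this.trans hfe)
        exact spanned_mono rk hR1 hR2 hrej.1 hMsub
    have h2 := hbasis.2
    rw [key, herase] at h2
    omega

end Construction
section Molecule
variable {α : Type*} [Fintype α] [LinearOrder α] (rk : Finset α → ℕ)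
variable (hR0 : rk ∅ = 0)
variable (hR1 : ∀ A B : Finset α, A ⊆ B → rk A ≤ rk B)
variable (hR2 : ∀ A B : Finset α, rk (A ∪ B) + rk (A ∩ B) ≤ rk A + rk B)
variable (hR3 : ∀ (A : Finset α) (e : α), rk (insert e A) ≤ rk A + 1)

lemma intAct_subset (B : Finset α) : intAct rk B ⊆ B := by
  intro x hx
  simp only [intAct, mem_filter] at hx
  exact hx.1

lemma extAct_not_mem {B : Finset α} {e : α} (he : e ∈ extAct rk B) : e ∉ B := by
  rw [extAct, mem_filter, mem_sdiff] at he
  exact he.1.2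

include hR1 hR2 in
lemma ext_spans {B : Finset α} {e : α} (he : e ∈ extAct rk B) :
    rk (insert e B) = rk B := by
  rw [extAct, mem_filter] at he
  exact spanned_mono rk hR1 hR2 he.2 (filter_subset _ _)

include hR0 hR1 hR2 hR3 in
lemma key1 {B : Finset α} (hB : IsBasis rk B) {e : α} (he : e ∈ extAct rk B)
    {i : α} (hi : i ∈ intAct rk B) :
    rk (insert e (B.erase i)) = rk (B.erase i) := by
  have heB : e ∉ B := extAct_not_mem rk he
  have hesp : rk (insert e (B.filter (fun b => e < b))) = rk (B.filter (fun b => e < b)) := by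
    rw [extAct, mem_filter] at he; exact he.2
  simp only [intAct, mem_filter] at hi
  obtain ⟨hiB, hiact⟩ := hi
  rcases lt_trichotomy e i with h | h | h
  · have hnb := hiact e h
    have herase : rk (B.erase i) = B.card - 1 := by
      rw [subset_indep rk hR0 hR3 hB.1 (erase_subset i B), card_erase_of_mem hiB]
    have hone : 1 ≤ B.card := card_pos.2 ⟨i, hiB⟩
    have h3 := hR3 (B.erase i) e
    have hmono := hR1 (B.erase i) (insert e (B.erase i)) (subset_insert _ _)
    by_contra hne
    apply hnb
    have heBe : e ∉ B.erase i := fun hin => heB (mem_of_mem_erase hin)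
    have hcard : (insert e (B.erase i)).card = B.card := by
      rw [card_insert_of_notMem heBe, card_erase_of_mem hiB]; omega
    have huniv : rk univ = B.card := hB.2 ▸ hB.1
    constructor
    · omega
    · omega
  · exact absurd (h ▸ hiB) heB
  · have hsub : B.filter (fun b => e < b) ⊆ B.erase i := by
      intro x hx
      rw [mem_filter] at hx
      exact mem_erase.2 ⟨ne_of_gt (h.trans hx.2), hx.1⟩
    exact spanned_mono rk hR1 hR2 hesp hsub

include hR0 hR1 hR2 hR3 in
lemma key2 {B : Finset α} (hB : IsBasis rk B) {e : α} (he : e ∈ extAct rk B) :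
    ∀ J ⊆ intAct rk B, rk (insert e (B \ J)) = rk (B \ J) := by
  intro J
  induction J using Finset.induction with
  | empty => intro _; simpa using ext_spans rk hR1 hR2 he
  | @insert i J hiJ ih =>
    intro hsub
    have hJI : J ⊆ intAct rk B := (subset_insert _ _).trans hsub
    have hiI : i ∈ intAct rk B := hsub (mem_insert_self _ _)
    have hJB : J ⊆ B := hJI.trans (intAct_subset rk B)
    have hiB : i ∈ B := intAct_subset rk B hiI
    have hJB' : insert i J ⊆ B := hsub.trans (intAct_subset rk B)
    have heB : e ∉ B := extAct_not_mem rk he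
    set X := insert e (B \ J) with hX
    set Y := insert e (B.erase i) with hY
    have hXY : X ∪ Y = insert e B := by
      ext x
      have hne' : x ∈ J → x ≠ i := fun hy hc => hiJ (hc ▸ hy)
      simp only [hX, hY, mem_union, mem_insert, mem_sdiff, mem_erase]
      constructor
      · tauto
      · rintro (rfl | hx)
        · tauto
        · by_cases hxJ : x ∈ J
          · exact Or.inr (Or.inr ⟨hne' hxJ, hx⟩)
          · exact Or.inl (Or.inr ⟨hx, hxJ⟩)
    have hXcapY : X ∩ Y = insert e (B \ insert i J) := by
      ext x
      simp only [hX, hY, mem_inter, mem_insert, mem_sdiff, mem_erase]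
      tauto
    have hIH := ih hJI
    have hrkBJ : rk (B \ J) = B.card - J.card := by
      rw [subset_indep rk hR0 hR3 hB.1 sdiff_subset, card_sdiff_of_subset hJB]
    have hrkX : rk X = B.card - J.card := by rw [hX, hIH, hrkBJ]
    have hrkY : rk Y = B.card - 1 := by
      rw [hY, key1 rk hR0 hR1 hR2 hR3 hB he hiI,
        subset_indep rk hR0 hR3 hB.1 (erase_subset i B), card_erase_of_mem hiB]
    have hXuY : rk (insert e B) = B.card := by
      rw [ext_spans rk hR1 hR2 he, hB.1]
    have hsubmod := hR2 X Y
    rw [hXY, hXcapY, hXuY] at hsubmod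
    have hrkBJ' : rk (B \ insert i J) = B.card - (J.card + 1) := by
      rw [subset_indep rk hR0 hR3 hB.1 sdiff_subset, card_sdiff_of_subset hJB',
        card_insert_of_notMem hiJ]
    have hmono := hR1 (B \ insert i J) (insert e (B \ insert i J)) (subset_insert _ _)
    have hcardle : (insert i J).card ≤ B.card := card_le_card hJB'
    rw [card_insert_of_notMem hiJ] at hcardle
    omega

include hR0 hR1 hR2 hR3 in
lemma molecule {B : Finset α} (hB : IsBasis rk B) :
    IsMoleculeWith rk (B \ intAct rk B) (intAct rk B) (extAct rk B) := by
  set I := intAct rk B with hI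
  set T := extAct rk B with hT
  refine ⟨sdiff_disjoint, ?_, ?_, ?_⟩
  · rw [disjoint_left]
    intro a ha hb
    exact extAct_not_mem rk hb (mem_sdiff.1 ha).1
  · rw [disjoint_left]
    intro a ha hb
    exact extAct_not_mem rk hb (intAct_subset rk B ha)
  · intro A hRA hAT
    have hRF : B \ I ∪ I = B := sdiff_union_of_subset (intAct_subset rk B)
    rw [hRF] at hAT
    have h2 : B \ A ⊆ I := by
      intro x hx
      rw [mem_sdiff] at hx
      by_contra hxI
      exact hx.2 (hRA (mem_sdiff.2 ⟨hx.1, hxI⟩))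
    have hsp : ∀ f ∈ A \ B, rk (insert f (A ∩ B)) = rk (A ∩ B) := by
      intro f hf
      rw [mem_sdiff] at hf
      have hfT : f ∈ T := by
        rcases mem_union.1 (hAT hf.1) with h | h
        · exact absurd h hf.2
        · exact h
      have := key2 rk hR0 hR1 hR2 hR3 hB hfT (B \ A) h2
      rwa [sdiff_sdiff_self_left, inter_comm B A] at this
    have hcover : A ∩ B ∪ A \ B = A := by
      ext x; simp only [mem_union, mem_inter, mem_sdiff]; tauto
    have hA : rk A = rk (A ∩ B) := by
      conv_lhs => rw [← hcover]
      exact rk_union_spanned rk hR1 hR2 hsp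
    have hAB : rk (A ∩ B) = (A ∩ B).card := subset_indep rk hR0 hR3 hB.1 inter_subset_right
    have hsplit : A ∩ B = (B \ I) ∪ (A ∩ I) := by
      ext x
      have hx1 : x ∈ B → x ∉ I → x ∈ A := fun a b => hRA (mem_sdiff.2 ⟨a, b⟩)
      have hx2 : x ∈ I → x ∈ B := fun a => intAct_subset rk B a
      simp only [mem_inter, mem_union, mem_sdiff]
      tauto
    have hdisj : Disjoint (B \ I) (A ∩ I) := by
      rw [disjoint_left]
      intro a ha hb
      exact (mem_sdiff.1 ha).2 (mem_inter.1 hb).2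
    have hcards : (A ∩ B).card = (B \ I).card + (A ∩ I).card := by
      rw [hsplit, card_union_of_disjoint hdisj]
    have hRind : rk (B \ I) = (B \ I).card := subset_indep rk hR0 hR3 hB.1 sdiff_subset
    omega

include hR0 hR1 hR2 hR3 in
lemma uniq_aux {A B B' : Finset α} (hB : IsBasis rk B) (hB' : IsBasis rk B')
    (h1 : B \ intAct rk B ⊆ A) (h2 : A ⊆ B' ∪ extAct rk B')
    {e : α} (heB : e ∈ B) (heB' : e ∉ B')
    (hmax : ∀ x, ((x ∈ B ∧ x ∉ B') ∨ (x ∈ B' ∧ x ∉ B)) → x ≤ e) : False := by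
  have huniv : rk univ = B.card := hB.2 ▸ hB.1
  have herase : rk (B.erase e) = B.card - 1 := by
    rw [subset_indep rk hR0 hR3 hB.1 (erase_subset e B), card_erase_of_mem heB]
  have hone : 1 ≤ B.card := card_pos.2 ⟨e, heB⟩
  by_cases heA : e ∈ A
  · have heT : e ∈ extAct rk B' := by
      rcases mem_union.1 (h2 heA) with h | h
      · exact absurd h heB'
      · exact h
    have hesp : rk (insert e (B'.filter (fun b => e < b))) = rk (B'.filter (fun b => e < b)) := by
      rw [extAct, mem_filter] at heT; exact heT.2
    have hsub : B'.filter (fun b => e < b) ⊆ B.erase e := by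
      intro x hx
      rw [mem_filter] at hx
      refine mem_erase.2 ⟨ne_of_gt hx.2, ?_⟩
      by_contra hxB
      exact absurd (hmax x (Or.inr ⟨hx.1, hxB⟩)) (not_le.2 hx.2)
    have := spanned_mono rk hR1 hR2 hesp hsub
    rw [insert_erase heB, hB.1] at this
    omega
  · have heI : e ∈ intAct rk B := by
      by_contra hcon
      exact heA (h1 (mem_sdiff.2 ⟨heB, hcon⟩))
    simp only [intAct, mem_filter] at heI
    obtain ⟨f, hfB', hf⟩ : ∃ f ∈ B', rk (insert f (B.erase e)) ≠ rk (B.erase e) := by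
      by_contra hcon
      push_neg at hcon
      have hu := rk_union_spanned rk hR1 hR2 (S := B.erase e) (X := B') hcon
      have hge : rk B' ≤ rk (B.erase e ∪ B') := hR1 _ _ subset_union_right
      have hBval : rk B' = B.card := hB'.2.trans huniv
      omega
    have hfBe : f ∉ B.erase e := fun hin => hf (by rw [insert_eq_self.2 hin])
    have hfne : f ≠ e := fun hc => heB' (hc ▸ hfB')
    have hfB : f ∉ B := fun hin => hfBe (mem_erase.2 ⟨hfne, hin⟩)
    have hflt : f < e := lt_of_le_of_ne (hmax f (Or.inr ⟨hfB', hfB⟩)) hfne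
    apply heI.2 f hflt
    have hcd : (insert f (B.erase e)).card = B.card := by
      rw [card_insert_of_notMem hfBe, card_erase_of_mem heB]; omega
    have hb1 := hR3 (B.erase e) f
    have hb2 := hR1 (B.erase e) (insert f (B.erase e)) (subset_insert _ _)
    have hrk : rk (insert f (B.erase e)) = B.card := by omega
    exact ⟨by rw [hrk, hcd], by rw [hrk, huniv]⟩

end Molecule

/-- Crapo decomposition: the power set `2^E` is the disjoint union over
bases `B` of the intervals `[B∖I(B), B∪E(B)]` (every subset lies in exactly one such
interval), and each such interval is a molecule with independent part `F = I(B)` and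
dependent part `T = E(B)`. -/
theorem crapo_decomposition {α : Type*} [Fintype α] [LinearOrder α]
    (rk : Finset α → ℕ)
    (hR0 : rk ∅ = 0)
    (hR1 : ∀ A B : Finset α, A ⊆ B → rk A ≤ rk B)
    (hR2 : ∀ A B : Finset α, rk (A ∪ B) + rk (A ∩ B) ≤ rk A + rk B)
    (hR3 : ∀ (A : Finset α) (e : α), rk (insert e A) ≤ rk A + 1) :
    (∀ A : Finset α, ∃! B : Finset α, IsBasis rk B ∧
        B \ intAct rk B ⊆ A ∧ A ⊆ B ∪ extAct rk B) ∧
    (∀ B : Finset α, IsBasis rk B →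
        B ∪ extAct rk B = (B \ intAct rk B) ∪ intAct rk B ∪ extAct rk B ∧
        IsMoleculeWith rk (B \ intAct rk B) (intAct rk B) (extAct rk B)) := by
  constructor
  · intro A
    refine ⟨gB rk A, ⟨gB_basis rk hR0 hR1 hR2 hR3 A, gB_int rk hR0 hR1 hR2 hR3 A,
      gB_ext rk hR1 hR2 A⟩, ?_⟩
    rintro B' ⟨hB', h1', h2'⟩
    set B := gB rk A with hBdef
    have hB : IsBasis rk B := gB_basis rk hR0 hR1 hR2 hR3 A
    have h1 : B \ intAct rk B ⊆ A := gB_int rk hR0 hR1 hR2 hR3 A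
    have h2 : A ⊆ B ∪ extAct rk B := gB_ext rk hR1 hR2 A
    by_contra hne
    have hs : ((B' \ B) ∪ (B \ B')).Nonempty := by
      by_contra hcon
      rw [not_nonempty_iff_eq_empty, union_eq_empty, sdiff_eq_empty_iff_subset,
        sdiff_eq_empty_iff_subset] at hcon
      exact hne (subset_antisymm hcon.1 hcon.2)
    set e := ((B' \ B) ∪ (B \ B')).max' hs with hedef
    have hemem := ((B' \ B) ∪ (B \ B')).max'_mem hs
    have hmax : ∀ x, ((x ∈ B' ∧ x ∉ B) ∨ (x ∈ B ∧ x ∉ B')) → x ≤ e := by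
      intro x hx
      apply le_max'
      rw [mem_union, mem_sdiff, mem_sdiff]
      tauto
    rcases mem_union.1 hemem with h | h
    · rw [mem_sdiff] at h
      exact uniq_aux rk hR0 hR1 hR2 hR3 hB' hB h1' h2 h.1 h.2 hmax
    · rw [mem_sdiff] at h
      exact uniq_aux rk hR0 hR1 hR2 hR3 hB hB' h1 h2' h.1 h.2
        (fun x hx => hmax x (Or.symm hx))
  · intro B hB
    refine ⟨?_, molecule rk hR0 hR1 hR2 hR3 hB⟩
    rw [sdiff_union_of_subset (intAct_subset rk B)]
end

section
/- Let G be a finitely generated abelian group, A a finite list of elements of G, and e an element of G. Let G_A denote the torsion subgroup of the quotient of G by the subgroup generated by A. If e is not a torsion element of G/⟨A⟩, there is a group monomorphism from G_A into G_{A∪{e}}; if e is a torsion element of G/⟨A⟩, there is a group epimorphism from G_A onto G_{A∪{e}}. -/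
/-- The torsion subgroup of the quotient of `G` by the subgroup generated by the
finite set `s`. -/
def torsionQuot (G : Type*) [AddCommGroup G] (s : Set G) : Type _ :=
  AddCommGroup.torsion (G ⧸ AddSubgroup.closure s)

noncomputable instance (G : Type*) [AddCommGroup G] (s : Set G) :
    AddCommGroup (torsionQuot G s) :=
  inferInstanceAs (AddCommGroup (AddCommGroup.torsion (G ⧸ AddSubgroup.closure s)))

/-- let `G` be a finitely generated abelian group, `A` a finite list of
elements of `G` and `e ∈ G`; write `G_A` for the torsion subgroup of `G/⟨A⟩`.
If `e` is not a torsion element of `G/⟨A⟩` there is a monomorphism `G_A ↪ G_{A∪{e}}`;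
if `e` is a torsion element of `G/⟨A⟩` there is an epimorphism `G_A ↠ G_{A∪{e}}`. -/
theorem torsion_mono_or_epi (G : Type*) [AddCommGroup G] [AddGroup.FG G]
    (s : Finset G) (e : G) :
    (¬ IsOfFinAddOrder
        ((QuotientAddGroup.mk e : G ⧸ AddSubgroup.closure (s : Set G))) →
      ∃ f : torsionQuot G (s : Set G) →+ torsionQuot G (insert e (s : Set G)),
        Function.Injective f) ∧
    (IsOfFinAddOrder
        ((QuotientAddGroup.mk e : G ⧸ AddSubgroup.closure (s : Set G))) →
      ∃ f : torsionQuot G (s : Set G) →+ torsionQuot G (insert e (s : Set G)),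
        Function.Surjective f) := by
  classical
  set H := AddSubgroup.closure (s : Set G) with hH
  set H' := AddSubgroup.closure (insert e (s : Set G)) with hH'
  have hle : H ≤ H' := AddSubgroup.closure_mono (Set.subset_insert e _)
  let π : G ⧸ H →+ G ⧸ H' := QuotientAddGroup.map H H' (AddMonoidHom.id G) hle
  have hmap : H'.map (QuotientAddGroup.mk' H)
      = AddSubgroup.zmultiples ((QuotientAddGroup.mk e : G ⧸ H)) := by
    rw [hH', AddMonoidHom.map_closure, Set.image_insert_eq]
    have h0 : (QuotientAddGroup.mk' H) '' (s : Set G) ⊆ {(0 : G ⧸ H)} := by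
      rintro _ ⟨g, hg, rfl⟩
      simp only [Set.mem_singleton_iff]
      rw [QuotientAddGroup.mk'_apply, QuotientAddGroup.eq_zero_iff]
      exact AddSubgroup.subset_closure hg
    apply le_antisymm
    · rw [AddSubgroup.closure_le]
      rintro x (rfl | hx)
      · exact AddSubgroup.mem_zmultiples _
      · rcases h0 hx with rfl
        exact zero_mem _
    · rw [AddSubgroup.zmultiples_le]
      exact AddSubgroup.subset_closure (Set.mem_insert _ _)
  -- π (mk g) = 0 iff mk g ∈ zmultiples (mk e)
  have hker : ∀ x : G ⧸ H, π x = 0 ↔ x ∈ AddSubgroup.zmultiples ((QuotientAddGroup.mk e : G ⧸ H)) := by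
    intro x
    obtain ⟨g, rfl⟩ := QuotientAddGroup.mk'_surjective H x
    rw [← hmap]
    constructor
    · intro h
      have hg : g ∈ H' := by
        rwa [show π ((QuotientAddGroup.mk' H) g) = (QuotientAddGroup.mk' H') g from rfl,
          QuotientAddGroup.mk'_apply, QuotientAddGroup.eq_zero_iff] at h
      exact ⟨g, hg, rfl⟩
    · rintro ⟨g', hg', hgg⟩
      have hmem : -g' + g ∈ H := by
        rwa [QuotientAddGroup.mk'_apply, QuotientAddGroup.mk'_apply,
          QuotientAddGroup.eq] at hgg
      have : g ∈ H' := by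
        have := add_mem hg' (hle hmem)
        rwa [add_neg_cancel_left] at this
      show (QuotientAddGroup.mk' H') g = 0
      rwa [QuotientAddGroup.mk'_apply, QuotientAddGroup.eq_zero_iff]
  -- the induced map on torsion subgroups
  have htor : ∀ x : AddCommGroup.torsion (G ⧸ H),
      π x.1 ∈ AddCommGroup.torsion (G ⧸ H') := by
    rintro ⟨x, hx⟩
    obtain ⟨n, hn, h⟩ := hx.exists_nsmul_eq_zero
    exact isOfFinAddOrder_iff_nsmul_eq_zero.mpr ⟨n, hn, by rw [← map_nsmul, h, map_zero]⟩
  set f0 : AddCommGroup.torsion (G ⧸ H) →+ AddCommGroup.torsion (G ⧸ H') :=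
    AddMonoidHom.codRestrict (π.comp (AddCommGroup.torsion (G ⧸ H)).subtype)
      (AddCommGroup.torsion (G ⧸ H')) htor with hf0
  constructor
  · intro hnt
    refine ⟨f0, ?_⟩
    have : Function.Injective f0 := by
      rw [injective_iff_map_eq_zero]
      intro x hx
      have h0 : π x.1 = 0 := congrArg Subtype.val hx
      have hmem := (hker x.1).mp h0
      rw [AddSubgroup.mem_zmultiples_iff] at hmem
      obtain ⟨k, hk⟩ := hmem
      obtain ⟨n, hn, hnx⟩ := x.2.exists_nsmul_eq_zero
      by_cases hk0 : k = 0
      · apply Subtype.ext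
        rw [← hk, hk0, zero_smul, ZeroMemClass.coe_zero]
      · exfalso
        apply hnt
        rw [isOfFinAddOrder_iff_zsmul_eq_zero]
        refine ⟨(n : ℤ) * k, by positivity, ?_⟩
        rw [mul_smul, hk, Nat.cast_smul_eq_nsmul]
        exact hnx
    exact this
  · intro ht
    refine ⟨f0, ?_⟩
    have : Function.Surjective f0 := by
      rintro ⟨y, hy⟩
      obtain ⟨g, rfl⟩ := QuotientAddGroup.mk'_surjective H' y
      have hx : IsOfFinAddOrder ((QuotientAddGroup.mk' H) g) := by
        obtain ⟨n, hn, hny⟩ := hy.exists_nsmul_eq_zero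
        have h0 : π (n • (QuotientAddGroup.mk' H) g) = 0 := by
          rw [map_nsmul]; exact hny
        have hmem := (hker _).mp h0
        rw [AddSubgroup.mem_zmultiples_iff] at hmem
        obtain ⟨k, hk⟩ := hmem
        obtain ⟨m, hm, hme⟩ := ht.exists_nsmul_eq_zero
        rw [isOfFinAddOrder_iff_nsmul_eq_zero]
        refine ⟨m * n, by positivity, ?_⟩
        rw [mul_smul, ← hk, smul_comm, hme, smul_zero]
      exact ⟨⟨_, hx⟩, Subtype.ext rfl⟩
    exact this
end

section
/- For a representable arithmetic matroid given by a list of elements of a finitely generated abelian group G, and a molecule [R, R∪F∪T], there is a group isomorphism G_{R∪F}/G_R ≅ G_{R∪F∪T}/G_{R∪T}, where G_A denotes the torsion subgroup of G/⟨L_A⟩. In particular m(R)m(R∪F∪T) = m(R∪F)m(R∪T) where m(A) := |G_A|. -/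
set_option maxHeartbeats 1000000
set_option linter.unusedSectionVars false

variable {α : Type*} [DecidableEq α] {G : Type*} [AddCommGroup G]

/-- The subgroup `⟨L_A⟩` generated by the sublist of the list `g` indexed by `A`. -/
def listSub (g : α → G) (A : Finset α) : AddSubgroup G :=
  AddSubgroup.closure (g '' ↑A)

/-- The (free) rank `rk(A)` of `⟨L_A⟩`. -/
noncomputable def listRk (g : α → G) (A : Finset α) : ℕ :=
  Module.finrank ℤ (listSub g A)

/-- `G_A`: the torsion subgroup of `G/⟨L_A⟩`. -/
def listTorsion (g : α → G) (A : Finset α) : AddSubgroup (G ⧸ listSub g A) :=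
  AddCommGroup.torsion (G ⧸ listSub g A)

/-- The natural map `G_A → G_B` (restriction to torsion parts of the projection
`G/⟨L_A⟩ → G/⟨L_B⟩`), for `A ⊆ B`. -/
noncomputable def torsionQuotMap (g : α → G) (A B : Finset α) (h : A ⊆ B) :
    listTorsion g A →+ listTorsion g B :=
  let f : (G ⧸ listSub g A) →+ (G ⧸ listSub g B) :=
    QuotientAddGroup.map (listSub g A) (listSub g B) (AddMonoidHom.id G)
      (fun x hx => AddSubgroup.closure_mono
        (Set.image_mono (f := g) (Finset.coe_subset.mpr h)) hx)
  AddMonoidHom.codRestrict (f.comp (listTorsion g A).subtype) (listTorsion g B)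
    (fun x => f.isOfFinAddOrder x.2)

/-- The multiplicity `m(A) = |G_A|`. -/
noncomputable def listMult (g : α → G) (A : Finset α) : ℕ :=
  Nat.card (listTorsion g A)


open Module

section Core
variable {R : Type} [CommRing R] [IsDomain R] {M : Type*} [AddCommGroup M] [Module R M]

lemma rank_map_mkQ_add (p q : Submodule R M) (hpq : p ≤ q) :
    Module.rank R (q.map p.mkQ) + Module.rank R p = Module.rank R q := by
  let φ : q →ₗ[R] M ⧸ p := p.mkQ.comp q.subtype
  have hker : LinearMap.ker φ = Submodule.comap q.subtype p := by
    ext x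
    simp [φ, Submodule.Quotient.mk_eq_zero]
  have hrange : LinearMap.range φ = q.map p.mkQ := by
    rw [LinearMap.range_comp, Submodule.range_subtype]
  have h1 := rank_quotient_add_rank_of_isDomain (R := R) (M := q) (LinearMap.ker φ)
  have e1 : (q ⧸ LinearMap.ker φ) ≃ₗ[R] (q.map p.mkQ) := hrange ▸ φ.quotKerEquivRange
  have e2 : (LinearMap.ker φ) ≃ₗ[R] p := hker ▸ (Submodule.comapSubtypeEquivOfLe hpq)
  rw [e1.rank_eq, e2.rank_eq] at h1
  exact h1

lemma finrank_map_mkQ_add [Module.Finite R M] (p q : Submodule R M) (hpq : p ≤ q) :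
    finrank R (q.map p.mkQ) + finrank R p = finrank R q := by
  have h := rank_map_mkQ_add p q hpq
  have hM : Module.rank R M < Cardinal.aleph0 := Module.rank_lt_aleph0 R M
  have h1 : Module.rank R (q.map p.mkQ) < Cardinal.aleph0 :=
    lt_of_le_of_lt ((Submodule.rank_le _).trans (rank_quotient_le p)) hM
  have h2 : Module.rank R p < Cardinal.aleph0 := lt_of_le_of_lt (Submodule.rank_le _) hM
  have := congrArg Cardinal.toNat h
  rwa [Cardinal.toNat_add h1 h2] at this

lemma exists_smul_mem_of_rank_eq [Module.Finite R M] (p q : Submodule R M) (hpq : p ≤ q)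
    (hr : finrank R q = finrank R p) {x : M} (hx : x ∈ q) :
    ∃ n : R, n ≠ 0 ∧ n • x ∈ p := by
  have h := finrank_map_mkQ_add p q hpq
  rw [hr] at h
  have h0 : finrank R (q.map p.mkQ) = 0 := by omega
  have hfin : Module.rank R (q.map p.mkQ) < Cardinal.aleph0 :=
    lt_of_le_of_lt ((Submodule.rank_le _).trans (rank_quotient_le p))
      (Module.rank_lt_aleph0 R M)
  have hrk : Module.rank R (q.map p.mkQ) = 0 := by
    rw [Module.finrank] at h0
    exact (Cardinal.toNat_eq_zero.mp h0).resolve_right (not_le.mpr hfin)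
  obtain ⟨n, hn, hnx⟩ := rank_eq_zero_iff.mp hrk ⟨p.mkQ x, Submodule.mem_map_of_mem hx⟩
  refine ⟨n, hn, ?_⟩
  have h2 : p.mkQ (n • x) = 0 := by
    have := congrArg (Subtype.val) hnx
    simpa using this
  rwa [← Submodule.Quotient.mk_eq_zero]

end Core

section Key3
variable {R : Type} [CommRing R] [IsDomain R] {M : Type*} [AddCommGroup M] [Module R M]

lemma smul_eq_zero_of_spanning {ι : Type*} [Fintype ι] (v : ι → M)
    (hspan : Submodule.span R (Set.range v) = ⊤)
    (hrank : Module.rank R M = Fintype.card ι) :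
    ∀ (x : M) (n : R), n ≠ 0 → n • x = 0 → x = 0 := by
  let φ := Finsupp.linearCombination R v
  have hsurj : Function.Surjective φ := by
    rw [← LinearMap.range_eq_top, Finsupp.range_linearCombination, hspan]
  have h1 := rank_quotient_add_rank_of_isDomain (R := R) (M := ι →₀ R) (LinearMap.ker φ)
  have e1 : ((ι →₀ R) ⧸ LinearMap.ker φ) ≃ₗ[R] M := φ.quotKerEquivOfSurjective hsurj
  have e1l := e1.lift_rank_eq
  rw [hrank, Cardinal.lift_natCast] at e1l
  have e1q : Module.rank R ((ι →₀ R) ⧸ LinearMap.ker φ) = Fintype.card ι :=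
    Cardinal.lift_eq_nat_iff.mp e1l
  rw [e1q] at h1
  have hfree : Module.rank R (ι →₀ R) = Fintype.card ι := by
    rw [rank_finsupp_self R ι]
    simp [Cardinal.mk_fintype]
  rw [hfree] at h1
  have hkfin : Module.rank R (LinearMap.ker φ) < Cardinal.aleph0 := by
    refine lt_of_le_of_lt (Submodule.rank_le _) ?_
    rw [hfree]; exact Cardinal.nat_lt_aleph0 _
  have hker0 : Module.rank R (LinearMap.ker φ) = 0 := by
    have h2 := congrArg Cardinal.toNat h1
    rw [Cardinal.toNat_add (Cardinal.nat_lt_aleph0 _) hkfin] at h2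
    simp only [Cardinal.toNat_natCast] at h2
    have h3 : Cardinal.toNat (Module.rank R (LinearMap.ker φ)) = 0 := by omega
    exact (Cardinal.toNat_eq_zero.mp h3).resolve_right (not_le.mpr hkfin)
  have hker_bot : LinearMap.ker φ = ⊥ := by
    rw [eq_bot_iff]
    intro c hc
    obtain ⟨a, ha, hac⟩ := (rank_eq_zero_iff (R := R) (M := ↥(LinearMap.ker φ))).mp hker0 ⟨c, hc⟩
    have hac' : a • c = 0 := congrArg Subtype.val hac
    have : c = 0 := (smul_eq_zero.mp hac').resolve_left ha
    simp [this]
  intro x n hn hx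
  obtain ⟨y, rfl⟩ := hsurj x
  have h4 : φ (n • y) = 0 := by rw [map_smul, hx]
  have hy : n • y = 0 := by
    have h5 : n • y ∈ LinearMap.ker φ := LinearMap.mem_ker.mpr h4
    rw [hker_bot] at h5; simpa using h5
  have : y = 0 := (smul_eq_zero.mp hy).resolve_left hn
  rw [this, map_zero]

end Key3

section Bridge
variable {α : Type*} [DecidableEq α] {G : Type*} [AddCommGroup G]

lemma listSub_eq (g : α → G) (A : Finset α) :
    listSub g A = (Submodule.span ℤ (g '' ↑A)).toAddSubgroup :=
  (Submodule.span_int_eq_addSubgroupClosure _).symm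

lemma mem_listSub_iff {g : α → G} {A : Finset α} {x : G} :
    x ∈ listSub g A ↔ x ∈ Submodule.span ℤ (g '' ↑A) := by
  rw [listSub_eq]
  exact Iff.rfl

/-- identity equivalence between a submodule's subtype and its `toAddSubgroup` subtype -/
def toAddSubgroupEquiv (p : Submodule ℤ G) : ↥p.toAddSubgroup ≃+ ↥p where
  toFun x := ⟨x.1, x.2⟩
  invFun x := ⟨x.1, x.2⟩
  left_inv _ := rfl
  right_inv _ := rfl
  map_add' _ _ := rfl

lemma listRk_eq (g : α → G) (A : Finset α) :
    listRk g A = Module.finrank ℤ (Submodule.span ℤ (g '' ↑A)) := by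
  unfold listRk
  have e : ↥(listSub g A) ≃+ ↥(Submodule.span ℤ (g '' ↑A)) :=
    (AddEquiv.addSubgroupCongr (listSub_eq g A)).trans
      (toAddSubgroupEquiv (Submodule.span ℤ (g '' ↑A)))
  exact e.toIntLinearEquiv.finrank_eq

end Bridge

set_option linter.unusedSectionVars false

section Main
variable {α : Type*} [DecidableEq α] {G : Type*} [AddCommGroup G]

lemma exists_smul_mem_listSpan [AddGroup.FG G] (g : α → G) {A B : Finset α} (hAB : A ⊆ B)
    (hr : listRk g B = listRk g A) {x : G} (hx : x ∈ Submodule.span ℤ (g '' ↑B)) :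
    ∃ n : ℤ, n ≠ 0 ∧ n • x ∈ Submodule.span ℤ (g '' ↑A) := by
  have : Module.Finite ℤ G := Module.Finite.iff_addGroup_fg.mpr ‹_›
  refine exists_smul_mem_of_rank_eq _ _
    (Submodule.span_mono (Set.image_mono (Finset.coe_subset.mpr hAB))) ?_ hx
  rw [← listRk_eq, ← listRk_eq]
  exact hr

lemma mem_of_smul_mem_listSpan [AddGroup.FG G] (g : α → G) {B F : Finset α}
    (hr : listRk g (B ∪ F) = listRk g B + F.card) {x : G}
    (hx : x ∈ Submodule.span ℤ (g '' ↑(B ∪ F)))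
    {n : ℤ} (hn : n ≠ 0) (hnx : n • x ∈ Submodule.span ℤ (g '' ↑B)) :
    x ∈ Submodule.span ℤ (g '' ↑B) := by
  have : Module.Finite ℤ G := Module.Finite.iff_addGroup_fg.mpr ‹_›
  have : IsNoetherian ℤ G := isNoetherian_of_isNoetherianRing_of_finite ℤ G
  set p := Submodule.span ℤ (g '' ↑B) with hp
  set q := Submodule.span ℤ (g '' ↑(B ∪ F)) with hq
  have hpq : p ≤ q := Submodule.span_mono (Set.image_mono
    (Finset.coe_subset.mpr Finset.subset_union_left))
  set W := q.map p.mkQ with hW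
  have hWrank : Module.finrank ℤ W = F.card := by
    have h1 := finrank_map_mkQ_add p q hpq
    rw [← listRk_eq, ← listRk_eq, ← hW] at h1
    omega
  -- W is spanned by the images of g f, f ∈ F
  have hWspan : W = Submodule.span ℤ (Set.range (fun f : {y // y ∈ F} => p.mkQ (g f.1))) := by
    rw [hW, hq, Submodule.map_span]
    refine le_antisymm (Submodule.span_le.mpr ?_) (Submodule.span_mono ?_)
    · rintro z ⟨y, ⟨a, ha, rfl⟩, rfl⟩
      rw [Finset.coe_union] at ha
      rcases ha with ha | ha
      · have hga : g a ∈ p := Submodule.subset_span ⟨a, ha, rfl⟩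
        have : p.mkQ (g a) = 0 := by rwa [← Submodule.Quotient.mk_eq_zero] at hga
        rw [this]
        exact Submodule.zero_mem _
      · exact Submodule.subset_span ⟨⟨a, ha⟩, rfl⟩
    · rintro z ⟨f, rfl⟩
      exact ⟨g f.1, ⟨f.1, by simp [Finset.coe_union, f.2], rfl⟩, rfl⟩
  have hmem : ∀ f : {y // y ∈ F}, p.mkQ (g f.1) ∈ W := fun f =>
    Submodule.mem_map_of_mem (Submodule.subset_span ⟨f.1, by simp [Finset.coe_union, f.2], rfl⟩)
  set v : {y // y ∈ F} → ↥W := fun f => ⟨p.mkQ (g f.1), hmem f⟩ with hv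
  have hvspan : Submodule.span ℤ (Set.range v) = ⊤ := by
    apply Submodule.map_injective_of_injective W.injective_subtype
    rw [Submodule.map_span, Submodule.map_top, Submodule.range_subtype]
    have himg : W.subtype '' (Set.range v) =
        Set.range (fun f : {y // y ∈ F} => p.mkQ (g f.1)) := by
      ext z
      constructor
      · rintro ⟨w, ⟨f, rfl⟩, rfl⟩
        exact ⟨f, rfl⟩
      · rintro ⟨f, rfl⟩
        exact ⟨v f, ⟨f, rfl⟩, rfl⟩
    rw [himg, ← hWspan]
  have hrankW : Module.rank ℤ ↥W = Fintype.card {y // y ∈ F} := by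
    have hfin : Module.rank ℤ ↥W < Cardinal.aleph0 :=
      lt_of_le_of_lt ((Submodule.rank_le _).trans (rank_quotient_le p))
        (Module.rank_lt_aleph0 ℤ G)
    rw [← Cardinal.cast_toNat_of_lt_aleph0 hfin]
    norm_cast
    rw [Fintype.card_coe]
    exact hWrank
  have key := smul_eq_zero_of_spanning v hvspan hrankW
  have hmkx : p.mkQ x ∈ W := Submodule.mem_map_of_mem hx
  have h0 : n • (⟨p.mkQ x, hmkx⟩ : ↥W) = 0 := by
    apply Subtype.ext
    show n • p.mkQ x = 0
    rw [← map_zsmul]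
    rwa [Submodule.mkQ_apply, Submodule.Quotient.mk_eq_zero]
  have hz := key _ n hn h0
  have hz' : p.mkQ x = 0 := congrArg Subtype.val hz
  rwa [Submodule.mkQ_apply, Submodule.Quotient.mk_eq_zero] at hz'

end Main

section Grp
variable {α : Type*} [DecidableEq α] {G : Type*} [AddCommGroup G]

lemma torsionQuotMap_coe_mk (g : α → G) (A B : Finset α) (h : A ⊆ B)
    (x : listTorsion g A) (v : G) (hv : (x : G ⧸ listSub g A) = QuotientAddGroup.mk v) :
    ((torsionQuotMap g A B h x : listTorsion g B) : G ⧸ listSub g B) =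
      QuotientAddGroup.mk v := by
  have h0 : ((torsionQuotMap g A B h x : listTorsion g B) : G ⧸ listSub g B) =
      QuotientAddGroup.map (listSub g A) (listSub g B) (AddMonoidHom.id G)
        (fun y hy => AddSubgroup.closure_mono
          (Set.image_mono (f := g) (Finset.coe_subset.mpr h)) hy)
        (x : G ⧸ listSub g A) := rfl
  rw [h0, hv]
  rfl

lemma isOfFinAddOrder_mk_iff {H : AddSubgroup G} {v : G} :
    IsOfFinAddOrder (QuotientAddGroup.mk v : G ⧸ H) ↔ ∃ n : ℤ, n ≠ 0 ∧ n • v ∈ H := by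
  rw [isOfFinAddOrder_iff_nsmul_eq_zero]
  constructor
  · rintro ⟨n, hn, h⟩
    refine ⟨(n : ℤ), by exact_mod_cast hn.ne', ?_⟩
    rw [← QuotientAddGroup.eq_zero_iff, QuotientAddGroup.mk_zsmul, natCast_zsmul]
    exact h
  · rintro ⟨n, hn, h⟩
    refine ⟨n.natAbs, Int.natAbs_pos.mpr hn, ?_⟩
    have h2 : ((n.natAbs : ℤ) • v) ∈ H := by
      rcases Int.natAbs_eq n with he | he
      · rwa [← he]
      · rw [← neg_neg ((n.natAbs : ℤ) • v)]
        refine H.neg_mem ?_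
        rw [← neg_smul, ← he]
        exact h
    rw [← natCast_zsmul, ← QuotientAddGroup.mk_zsmul, QuotientAddGroup.eq_zero_iff]
    exact h2

lemma mem_listTorsion_mk_iff {g : α → G} {A : Finset α} {v : G} :
    (QuotientAddGroup.mk v : G ⧸ listSub g A) ∈ listTorsion g A ↔
      ∃ n : ℤ, n ≠ 0 ∧ n • v ∈ Submodule.span ℤ (g '' ↑A) := by
  rw [show (listTorsion g A) = AddCommGroup.torsion (G ⧸ listSub g A) from rfl,
    AddCommGroup.mem_torsion, isOfFinAddOrder_mk_iff]
  simp only [mem_listSub_iff]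

end Grp

section Maps
variable {α : Type*} [DecidableEq α] {G : Type*} [AddCommGroup G]

lemma torsionQuotMap_injective [AddGroup.FG G] (g : α → G) {A E B : Finset α}
    (hB : B = A ∪ E) (hAB : A ⊆ B) (hr : listRk g B = listRk g A + E.card) :
    Function.Injective (torsionQuotMap g A B hAB) := by
  rw [injective_iff_map_eq_zero]
  intro x hx
  obtain ⟨v, hv⟩ := QuotientAddGroup.mk_surjective (x : G ⧸ listSub g A)
  have hx2 : (QuotientAddGroup.mk v : G ⧸ listSub g A) ∈ listTorsion g A := by
    rw [hv]; exact x.2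
  obtain ⟨n, hn, hnv⟩ := mem_listTorsion_mk_iff.mp hx2
  have h0 : ((torsionQuotMap g A B hAB x : listTorsion g B) : G ⧸ listSub g B) = 0 := by
    rw [hx]; rfl
  rw [torsionQuotMap_coe_mk g A B hAB x v hv.symm] at h0
  have hvB : v ∈ Submodule.span ℤ (g '' ↑B) := by
    rw [← mem_listSub_iff]
    exact (QuotientAddGroup.eq_zero_iff v).mp h0
  subst hB
  have hvA : v ∈ Submodule.span ℤ (g '' ↑A) := mem_of_smul_mem_listSpan g hr hvB hn hnv
  apply Subtype.ext
  rw [ZeroMemClass.coe_zero, ← hv]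
  exact (QuotientAddGroup.eq_zero_iff v).mpr (mem_listSub_iff.mpr hvA)

lemma torsionQuotMap_surjective [AddGroup.FG G] (g : α → G) {A B : Finset α} (hAB : A ⊆ B)
    (hr : listRk g B = listRk g A) :
    Function.Surjective (torsionQuotMap g A B hAB) := by
  intro y
  obtain ⟨v, hv⟩ := QuotientAddGroup.mk_surjective (y : G ⧸ listSub g B)
  have hy2 : (QuotientAddGroup.mk v : G ⧸ listSub g B) ∈ listTorsion g B := by
    rw [hv]; exact y.2
  obtain ⟨n, hn, hnv⟩ := mem_listTorsion_mk_iff.mp hy2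
  obtain ⟨m, hm, hmnv⟩ := exists_smul_mem_listSpan g hAB hr hnv
  have hx : (QuotientAddGroup.mk v : G ⧸ listSub g A) ∈ listTorsion g A :=
    mem_listTorsion_mk_iff.mpr ⟨m * n, mul_ne_zero hm hn, by rwa [mul_smul]⟩
  refine ⟨⟨_, hx⟩, ?_⟩
  apply Subtype.ext
  rw [torsionQuotMap_coe_mk g A B hAB ⟨_, hx⟩ v rfl, hv]

end Maps

/-- for a representable arithmetic matroid given by a list in a finitely
generated abelian group `G` and a molecule `[R, R∪F∪T]`, there is an isomorphism
`G_{R∪F}/G_R ≅ G_{R∪F∪T}/G_{R∪T}` (quotients by the images under the natural maps);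
in particular `m(R)·m(R∪F∪T) = m(R∪F)·m(R∪T)`. -/
theorem molecule_torsion_quotient_iso [Fintype α] [AddGroup.FG G]
    (g : α → G) (R F T : Finset α)
    (hRF : Disjoint R F) (hRT : Disjoint R T) (hFT : Disjoint F T)
    (hmol : ∀ A : Finset α, R ⊆ A → A ⊆ R ∪ F ∪ T →
      listRk g A = listRk g R + (A ∩ F).card) :
    Nonempty
      ((listTorsion g (R ∪ F) ⧸
          (torsionQuotMap g R (R ∪ F) Finset.subset_union_left).range) ≃+
       (listTorsion g (R ∪ F ∪ T) ⧸
          (torsionQuotMap g (R ∪ T) (R ∪ F ∪ T)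
            (Finset.union_subset_union Finset.subset_union_left
              (Finset.Subset.refl T))).range)) ∧
    listMult g R * listMult g (R ∪ F ∪ T) = listMult g (R ∪ F) * listMult g (R ∪ T) := by
  classical
  -- rank facts
  have hU : listRk g (R ∪ F) = listRk g R + F.card := by
    have h := hmol (R ∪ F) Finset.subset_union_left Finset.subset_union_left
    rwa [Finset.union_inter_cancel_right] at h
  have hZ : listRk g (R ∪ F ∪ T) = listRk g R + F.card := by
    have h := hmol (R ∪ F ∪ T)
      (Finset.subset_union_left.trans Finset.subset_union_left) (Finset.Subset.refl _)
    rwa [Finset.inter_eq_right.mpr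
      (Finset.subset_union_right.trans Finset.subset_union_left : F ⊆ R ∪ F ∪ T)] at h
  have hW : listRk g (R ∪ T) = listRk g R := by
    have h := hmol (R ∪ T) Finset.subset_union_left
      (Finset.union_subset_union Finset.subset_union_left (Finset.Subset.refl T))
    have hWF : (R ∪ T) ∩ F = ∅ := by
      rw [Finset.union_inter_distrib_right, Finset.disjoint_iff_inter_eq_empty.mp hRF,
        Finset.disjoint_iff_inter_eq_empty.mp hFT.symm]
      simp
    rwa [hWF, Finset.card_empty, add_zero] at h
  have hsub2 : R ∪ T ⊆ R ∪ F ∪ T :=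
    Finset.union_subset_union Finset.subset_union_left (Finset.Subset.refl T)
  have hZeq : R ∪ F ∪ T = (R ∪ T) ∪ F := by rw [Finset.union_right_comm]
  -- injectivity and surjectivity
  have hinj1 : Function.Injective (torsionQuotMap g R (R ∪ F) Finset.subset_union_left) :=
    torsionQuotMap_injective g rfl _ hU
  have hinj2 : Function.Injective (torsionQuotMap g (R ∪ T) (R ∪ F ∪ T) hsub2) :=
    torsionQuotMap_injective g hZeq _ (by rw [hZ, hW])
  have hsurjUZ : Function.Surjective
      (torsionQuotMap g (R ∪ F) (R ∪ F ∪ T) Finset.subset_union_left) :=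
    torsionQuotMap_surjective g _ (by rw [hZ, hU])
  set r1 := (torsionQuotMap g R (R ∪ F) Finset.subset_union_left).range with hr1
  set r2 := (torsionQuotMap g (R ∪ T) (R ∪ F ∪ T) hsub2).range with hr2
  set φ : listTorsion g (R ∪ F) →+ (listTorsion g (R ∪ F ∪ T) ⧸ r2) :=
    (QuotientAddGroup.mk' r2).comp
      (torsionQuotMap g (R ∪ F) (R ∪ F ∪ T) Finset.subset_union_left) with hφ
  have hφsurj : Function.Surjective φ :=
    (QuotientAddGroup.mk'_surjective r2).comp hsurjUZ
  -- span notation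
  have hST_le_SW : Submodule.span ℤ (g '' ↑T) ≤ Submodule.span ℤ (g '' ↑(R ∪ T)) :=
    Submodule.span_mono (Set.image_mono (Finset.coe_subset.mpr Finset.subset_union_right))
  have hSR_le_SW : Submodule.span ℤ (g '' ↑R) ≤ Submodule.span ℤ (g '' ↑(R ∪ T)) :=
    Submodule.span_mono (Set.image_mono (Finset.coe_subset.mpr Finset.subset_union_left))
  have hsup : Submodule.span ℤ (g '' ↑(R ∪ F ∪ T)) =
      Submodule.span ℤ (g '' ↑(R ∪ F)) ⊔ Submodule.span ℤ (g '' ↑T) := by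
    rw [← Submodule.span_union, ← Set.image_union, ← Finset.coe_union]
  -- kernel computation
  have hker : φ.ker = r1 := by
    ext x
    rw [AddMonoidHom.mem_ker]
    have hφx : φ x = QuotientAddGroup.mk
        (torsionQuotMap g (R ∪ F) (R ∪ F ∪ T) Finset.subset_union_left x) := rfl
    rw [hφx, QuotientAddGroup.eq_zero_iff]
    constructor
    · intro hmem
      obtain ⟨t, ht⟩ := hmem
      obtain ⟨v, hv⟩ := QuotientAddGroup.mk_surjective (x : G ⧸ listSub g (R ∪ F))
      obtain ⟨w, hw⟩ := QuotientAddGroup.mk_surjective (t : G ⧸ listSub g (R ∪ T))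
      have hvx : (QuotientAddGroup.mk v : G ⧸ listSub g (R ∪ F)) ∈ listTorsion g (R ∪ F) := by
        rw [hv]; exact x.2
      have hwt : (QuotientAddGroup.mk w : G ⧸ listSub g (R ∪ T)) ∈ listTorsion g (R ∪ T) := by
        rw [hw]; exact t.2
      have hval : (QuotientAddGroup.mk w : G ⧸ listSub g (R ∪ F ∪ T)) = QuotientAddGroup.mk v := by
        have h1 := congrArg (Subtype.val) ht
        rwa [torsionQuotMap_coe_mk g _ _ hsub2 t w hw.symm,
          torsionQuotMap_coe_mk g _ _ Finset.subset_union_left x v hv.symm] at h1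
      have hvw : v - w ∈ Submodule.span ℤ (g '' ↑(R ∪ F ∪ T)) := by
        rw [← mem_listSub_iff]
        rw [eq_comm, QuotientAddGroup.eq_iff_sub_mem] at hval
        exact hval
      rw [hsup, Submodule.mem_sup] at hvw
      obtain ⟨u, hu, z, hz, huz⟩ := hvw
      -- v - u = w + z
      have hvu : v - u = w + z := by
        have h2 : v = w + (u + z) := by rw [huz]; abel
        rw [h2]; abel
      -- w is torsion mod R
      obtain ⟨n, hn, hnw⟩ := mem_listTorsion_mk_iff.mp hwt
      obtain ⟨m, hm, hmnw⟩ := exists_smul_mem_listSpan g Finset.subset_union_left hW hnw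
      have hmnw' : (m * n) • w ∈ Submodule.span ℤ (g '' ↑R) := by rwa [mul_smul]
      obtain ⟨k, hk, hkz⟩ := exists_smul_mem_listSpan g Finset.subset_union_left hW
        (hST_le_SW hz)
      have hN : (m * n * k) • (v - u) ∈ Submodule.span ℤ (g '' ↑R) := by
        have hNe : (m * n * k) • (v - u) = k • ((m * n) • w) + (m * n) • (k • z) := by
          rw [hvu, smul_add, ← mul_smul, ← mul_smul]
          ring_nf
        rw [hNe]
        exact add_mem (Submodule.smul_mem _ k hmnw') (Submodule.smul_mem _ (m * n) hkz)
      have htR : (QuotientAddGroup.mk (v - u) : G ⧸ listSub g R) ∈ listTorsion g R :=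
        mem_listTorsion_mk_iff.mpr ⟨m * n * k, mul_ne_zero (mul_ne_zero hm hn) hk, hN⟩
      refine ⟨⟨_, htR⟩, ?_⟩
      apply Subtype.ext
      rw [torsionQuotMap_coe_mk g _ _ Finset.subset_union_left ⟨_, htR⟩ (v - u) rfl, ← hv]
      rw [QuotientAddGroup.eq_iff_sub_mem]
      have : v - u - v = -u := by abel
      rw [this]
      exact neg_mem (mem_listSub_iff.mpr hu)
    · rintro ⟨s, rfl⟩
      obtain ⟨v, hv⟩ := QuotientAddGroup.mk_surjective (s : G ⧸ listSub g R)
      obtain ⟨n, hn, hnv⟩ := mem_listTorsion_mk_iff.mp (hv ▸ s.2)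
      have htW : (QuotientAddGroup.mk v : G ⧸ listSub g (R ∪ T)) ∈ listTorsion g (R ∪ T) :=
        mem_listTorsion_mk_iff.mpr ⟨n, hn, hSR_le_SW hnv⟩
      refine ⟨⟨_, htW⟩, ?_⟩
      apply Subtype.ext
      rw [torsionQuotMap_coe_mk g _ _ hsub2 ⟨_, htW⟩ v rfl]
      have hxv : ((torsionQuotMap g R (R ∪ F) Finset.subset_union_left s :
          listTorsion g (R ∪ F)) : G ⧸ listSub g (R ∪ F)) = QuotientAddGroup.mk v :=
        torsionQuotMap_coe_mk g _ _ Finset.subset_union_left s v hv.symm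
      rw [torsionQuotMap_coe_mk g _ _ Finset.subset_union_left _ v hxv]
  -- the isomorphism
  have e : (listTorsion g (R ∪ F) ⧸ r1) ≃+ (listTorsion g (R ∪ F ∪ T) ⧸ r2) :=
    (QuotientAddGroup.quotientAddEquivOfEq hker.symm).trans
      (QuotientAddGroup.quotientKerEquivOfSurjective φ hφsurj)
  refine ⟨⟨e⟩, ?_⟩
  -- cardinalities
  have hcard1 : listMult g (R ∪ F) = Nat.card (listTorsion g (R ∪ F) ⧸ r1) * listMult g R := by
    rw [listMult, listMult, AddSubgroup.card_eq_card_quotient_mul_card_addSubgroup r1]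
    congr 1
    exact (Nat.card_congr (AddMonoidHom.ofInjective hinj1).toEquiv).symm
  have hcard2 : listMult g (R ∪ F ∪ T) =
      Nat.card (listTorsion g (R ∪ F ∪ T) ⧸ r2) * listMult g (R ∪ T) := by
    rw [listMult, listMult, AddSubgroup.card_eq_card_quotient_mul_card_addSubgroup r2]
    congr 1
    exact (Nat.card_congr (AddMonoidHom.ofInjective hinj2).toEquiv).symm
  have hq : Nat.card (listTorsion g (R ∪ F) ⧸ r1) =
      Nat.card (listTorsion g (R ∪ F ∪ T) ⧸ r2) := Nat.card_congr e.toEquiv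
  rw [hcard1, hcard2, ← hq]
  ring
end
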